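/- arXiv:2511.22331 — 5 statements merged into one kernel-verified Lean document; each statement's English description precedes it below -/
import Mathlib

section
/- Gradient oracles simulate Hessian-vector-product oracles for quadratic lower-level functions (core identity of Lemma 1): let g : ℝ^{d_x} × ℝ^{d_y} → ℝ be given by g(x,y) = ½ yᵀH y + xᵀJ y + bᵀy, where H ∈ ℝ^{d_y × d_y} is symmetric, J ∈ ℝ^{d_x × d_y} and b ∈ ℝ^{d_y}. Then for all x ∈ ℝ^{d_x} and y, v ∈ ℝ^{d_y}: ∇²_{yy} g(x,y) v = H v = ∇_y g(x,v) − ∇_y g(x,0), and ∇²_{xy} g(x,y) v = J v = ∇_x g(x,v). In particular, the response of the HVP oracle O^{hvp}(x,y,v) = (∇_x f(x,y), ∇_y f(x,y), ∇²_{xy} g(x,y) v, ∇²_{yy} g(x,y) v) is determined by the gradient-oracle responses of f and g at the points (x,y), (x,v) and (x,0). -/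
/-!
Statement 8: for a quadratic lower-level function
`g(x,y) = ½ yᵀH y + xᵀJ y + bᵀy` (with `H` symmetric), the Hessian-vector products
of `g` are determined by gradient evaluations:
`∇²_{yy} g(x,y) v = H v = ∇_y g(x,v) − ∇_y g(x,0)` and
`∇²_{xy} g(x,y) v = J v = ∇_x g(x,v)`.
-/

noncomputable section
open scoped RealInnerProductSpace

/-- `ℝⁿ` with the Euclidean structure. -/
abbrev EV (n : ℕ) : Type := EuclideanSpace ℝ (Fin n)

/-- Partial gradient of a function of two vector variables, with respect to the
first variable. -/
noncomputable def gradx {dx dy : ℕ} (g : EV dx → EV dy → ℝ) (x : EV dx) (y : EV dy) : EV dx :=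
  gradient (fun x' => g x' y) x

/-- Partial gradient of a function of two vector variables, with respect to the
second variable. -/
noncomputable def grady {dx dy : ℕ} (g : EV dx → EV dy → ℝ) (x : EV dx) (y : EV dy) : EV dy :=
  gradient (fun y' => g x y') y

lemma hasGradientAt_quad {n : ℕ} (A : EV n →L[ℝ] EV n)
    (hA : ∀ u w : EV n, ⟪A u, w⟫ = ⟪u, A w⟫) (c : EV n) (K : ℝ) (y : EV n) :
    HasGradientAt (fun y' : EV n => (1/2) * ⟪y', A y'⟫ + ⟪c, y'⟫ + K) (A y + c) y := by
  rw [hasGradientAt_iff_hasFDerivAt]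
  have h1 : HasFDerivAt (fun y' : EV n => ⟪y', A y'⟫)
      ((fderivInnerCLM ℝ (y, A y)).comp ((ContinuousLinearMap.id ℝ (EV n)).prod A)) y :=
    (hasFDerivAt_id y).inner ℝ (A.hasFDerivAt)
  have h2 : HasFDerivAt (fun y' : EV n => ⟪c, y'⟫) (innerSL ℝ c) y :=
    (innerSL ℝ c).hasFDerivAt
  have h := ((h1.const_mul (1/2 : ℝ)).add h2).add_const K
  refine h.congr_fderiv ?_
  ext w
  simp only [InnerProductSpace.toDual_apply_apply, ContinuousLinearMap.add_apply,
    ContinuousLinearMap.coe_smul', Pi.smul_apply, ContinuousLinearMap.coe_comp',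
    Function.comp_apply, ContinuousLinearMap.prod_apply, ContinuousLinearMap.coe_id',
    id_eq, fderivInnerCLM_apply, innerSL_apply_apply, inner_add_left, smul_eq_mul]
  rw [← hA y w, real_inner_comm w (A y)]
  ring

/-- **Gradient oracles simulate HVP oracles for quadratic lower-level functions**
(core identity of Lemma 1).  Here `∇²_{yy} g(x,·)` is realized as the Fréchet
derivative of `y ↦ ∇_y g(x,y)`, and `∇²_{xy} g(x,·)` as the Fréchet derivative of
`y ↦ ∇_x g(x,y)`. -/
theorem grad_oracle_simulates_hvp_for_quadratic_lower_level
    (dx dy : ℕ) (H : Matrix (Fin dy) (Fin dy) ℝ) (hH : H.IsSymm)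
    (J : Matrix (Fin dx) (Fin dy) ℝ) (b : EV dy)
    (g : EV dx → EV dy → ℝ)
    (hg : ∀ x y, g x y = (1/2) * ⟪y, Matrix.toEuclideanLin H y⟫
        + ⟪x, Matrix.toEuclideanLin J y⟫ + ⟪b, y⟫) :
    ∀ (x : EV dx) (y v : EV dy),
      (fderiv ℝ (fun y' => grady g x y') y) v = Matrix.toEuclideanLin H v ∧
      Matrix.toEuclideanLin H v = grady g x v - grady g x 0 ∧
      (fderiv ℝ (fun y' => gradx g x y') y) v = Matrix.toEuclideanLin J v ∧
      Matrix.toEuclideanLin J v = gradx g x v := by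
  intro x y v
  set A : EV dy →L[ℝ] EV dy := LinearMap.toContinuousLinearMap (Matrix.toEuclideanLin H) with hAdef
  set B : EV dy →L[ℝ] EV dx := LinearMap.toContinuousLinearMap (Matrix.toEuclideanLin J) with hBdef
  have hAapp : ∀ z, A z = Matrix.toEuclideanLin H z := fun z => rfl
  have hBapp : ∀ z, B z = Matrix.toEuclideanLin J z := fun z => rfl
  have hHerm : H.IsHermitian := by
    rwa [Matrix.IsHermitian, Matrix.conjTranspose_eq_transpose_of_trivial]
  have hsymm := Matrix.isHermitian_iff_isSymmetric.1 hHerm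
  have hA : ∀ u w : EV dy, ⟪A u, w⟫ = ⟪u, A w⟫ := fun u w => hsymm u w
  -- grady
  set c : EV dy := ContinuousLinearMap.adjoint B x + b with hc
  have hgy : ∀ z : EV dy, grady g x z = A z + c := by
    intro z
    have hfun : (fun y' => g x y') =
        fun y' : EV dy => (1/2) * ⟪y', A y'⟫ + ⟪c, y'⟫ + 0 := by
      funext y'
      rw [hg x y', hc]
      rw [inner_add_left, ContinuousLinearMap.adjoint_inner_left]
      simp [hAapp, hBapp]
      ring
    rw [grady, hfun]
    exact (hasGradientAt_quad A hA c 0 z).gradient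
  -- gradx
  have hgx : ∀ (x' : EV dx) (z : EV dy), gradx g x' z = B z := by
    intro x' z
    have hfun : (fun x'' => g x'' z) =
        fun x'' : EV dx => (1/2) * ⟪x'', (0 : EV dx →L[ℝ] EV dx) x''⟫ + ⟪B z, x''⟫
          + ((1/2) * ⟪z, Matrix.toEuclideanLin H z⟫ + ⟪b, z⟫) := by
      funext x''
      rw [hg x'' z]
      rw [real_inner_comm x'' (B z)]
      simp [hBapp]
      ring
    rw [gradx, hfun]
    have h0 : ∀ u w : EV dx, ⟪(0 : EV dx →L[ℝ] EV dx) u, w⟫ = ⟪u, (0 : EV dx →L[ℝ] EV dx) w⟫ := by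
      simp
    have := (hasGradientAt_quad (0 : EV dx →L[ℝ] EV dx) h0 (B z)
      ((1/2) * ⟪z, Matrix.toEuclideanLin H z⟫ + ⟪b, z⟫) x').gradient
    simpa using this
  refine ⟨?_, ?_, ?_, ?_⟩
  · have : (fun y' => grady g x y') = fun y' => A y' + c := funext hgy
    rw [this]
    have hf : HasFDerivAt (fun y' : EV dy => A y' + c) A y := A.hasFDerivAt.add_const c
    rw [hf.fderiv]
    exact hAapp v
  · rw [hgy v, hgy 0, hAapp v]
    simp
  · have : (fun y' => gradx g x y') = fun y' => B y' := funext (hgx x)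
    rw [this]
    rw [B.hasFDerivAt.fderiv]
    exact hBapp v
  · exact (hgx x v).symm
end
end

section
/- Properties of the lower-level hard instance (Lemma 5, items on ḡ^{sc}): for all integers K ≥ 1 and T ≥ 2, the function ḡ^{sc} : ℝ^T × ℝ^T × ℝ^{K(T−1)} → ℝ is a quadratic function; its gradient (jointly in (x,z,y)) is 5-Lipschitz continuous and all of its derivatives of order at least three vanish; and for every fixed x ∈ ℝ^T, the map (z,y) ↦ ḡ^{sc}(x,z,y) is (1/K²)-strongly convex jointly in (z,y). -/
noncomputable section
open scoped RealInnerProductSpace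

/-- The space `ℝ^{K(T−1)}` of lower-level coupling variables, presented as
`(T−1)` blocks of size `K`; here the sizes are `K+1` and `T+2` so that the paper's
constraints `K ≥ 1`, `T ≥ 2` hold automatically. -/
abbrev EY (K T : ℕ) : Type := EuclideanSpace ℝ (Fin (T + 1) × Fin (K + 1))

/-- The nonconvex regularizer `Υ_r(x) := 120 ∫₁ˣ t²(t−1)/(1+(t/r)²) dt`. -/
def Upsilon (r x : ℝ) : ℝ := 120 * ∫ t in (1 : ℝ)..x, t ^ 2 * (t - 1) / (1 + (t / r) ^ 2)

/-- The tridiagonal path-Laplacian matrix `A_K` (of size `K+1`). -/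
def AK (K : ℕ) : Matrix (Fin (K + 1)) (Fin (K + 1)) ℝ := fun i j =>
  if i = j then (if i.1 = 0 ∨ i.1 = K then 1 else 2)
  else if i.1 + 1 = j.1 ∨ j.1 + 1 = i.1 then -1 else 0

/-- `B = (K^{−2} I + A_K)⁻¹` (size `K+1`). -/
def BK (K : ℕ) : Matrix (Fin (K + 1)) (Fin (K + 1)) ℝ :=
  (((K + 1 : ℝ))⁻¹ ^ 2 • (1 : Matrix (Fin (K + 1)) (Fin (K + 1)) ℝ) + AK K)⁻¹

/-- `a_K = (1/K)(1 − B_{1,1}/B_{1,K})`. -/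
def aK (K : ℕ) : ℝ := (1 / (K + 1 : ℝ)) * (1 - BK K 0 0 / BK K 0 (Fin.last K))

/-- `b_K = K / B_{1,K}`. -/
def bK (K : ℕ) : ℝ := (K + 1 : ℝ) / BK K 0 (Fin.last K)

/-- The upper-level coupling term
`h(z,y) = Σ_{i=1}^{T−1} [(a_K/2)(z_i² + z_{i+1}²) + (b_K/2)(z_i y^{(i)}_1 − z_{i+1} y^{(i)}_K)]`. -/
def hfun (K T : ℕ) (z : EV (T + 2)) (y : EY K T) : ℝ :=
  ∑ i : Fin (T + 1),
    ((aK K / 2) * ((z i.castSucc) ^ 2 + (z i.succ) ^ 2)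
      + (bK K / 2) * (z i.castSucc * y (i, 0) - z i.succ * y (i, Fin.last K)))

/-- The strongly convex sub-chain
`h^{sc}(u,v,w) = ½ Σ_{j<K} (w_j − w_{j+1})² + ‖w‖²/(2K²) − (u w_1 − v w_K)`. -/
def hsc (K : ℕ) (u v : ℝ) (w : EV (K + 1)) : ℝ :=
  (1 / 2) * ∑ j : Fin K, (w j.castSucc - w j.succ) ^ 2
    + (1 / (2 * ((K + 1 : ℝ)) ^ 2)) * ‖w‖ ^ 2 - (u * w 0 - v * w (Fin.last K))

/-- The lower-level hard instance
`ḡ^{sc}(x,z,y) = ‖z‖²/(2K²) − ⟨x,z⟩ + Σ_{i=1}^{T−1} h^{sc}(x_i, x_{i+1}, y^{(i)})`. -/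
def gbar (K T : ℕ) (x z : EV (T + 2)) (y : EY K T) : ℝ :=
  (1 / (2 * ((K + 1 : ℝ)) ^ 2)) * ‖z‖ ^ 2 - ⟪x, z⟫
    + ∑ i : Fin (T + 1), hsc K (x i.castSucc) (x i.succ) (WithLp.toLp 2 (fun j => y (i, j)))

/-- The upper-level hard instance
`f̄^{nc-sc}(x,z,y) = (√ν/2)(z₁/√K − 1)² + ν Σ_{i=1}^{T−1} Υ_r(z_i/√K) + h(z,y)`
(it does not depend on `x`). -/
def fbar (K T : ℕ) (ν r : ℝ) (z : EV (T + 2)) (y : EY K T) : ℝ :=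
  (Real.sqrt ν / 2) * (z 0 / Real.sqrt (K + 1) - 1) ^ 2
    + ν * ∑ i : Fin (T + 1), Upsilon r (z i.castSucc / Real.sqrt (K + 1))
    + hfun K T z y

/-- The joint variable space `ℝ^T × ℝ^T × ℝ^{K(T−1)}`, as one Euclidean space. -/
abbrev EJ (K T : ℕ) : Type :=
  EuclideanSpace ℝ ((Fin (T + 2) ⊕ Fin (T + 2)) ⊕ (Fin (T + 1) × Fin (K + 1)))

/-- The `x`-component of a joint variable. -/
def jx {K T : ℕ} (w : EJ K T) : EV (T + 2) := WithLp.toLp 2 (fun i => w (Sum.inl (Sum.inl i)))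

/-- The `z`-component of a joint variable. -/
def jz {K T : ℕ} (w : EJ K T) : EV (T + 2) := WithLp.toLp 2 (fun i => w (Sum.inl (Sum.inr i)))

/-- The `y`-component of a joint variable. -/
def jy {K T : ℕ} (w : EJ K T) : EY K T := WithLp.toLp 2 (fun p => w (Sum.inr p))

/-- `ḡ^{sc}` as a function of the joint variable `(x,z,y)`. -/
def gbarJ (K T : ℕ) : EJ K T → ℝ := fun w => gbar K T (jx w) (jz w) (jy w)

/-- The joint variable space `ℝ^T × ℝ^{K(T−1)}` of the lower-level variables. -/
abbrev EZY (K T : ℕ) : Type :=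
  EuclideanSpace ℝ (Fin (T + 2) ⊕ (Fin (T + 1) × Fin (K + 1)))

/-- A real-valued function on a normed space is quadratic if it is a polynomial of
degree at most two. -/
def IsQuadratic {V : Type*} [NormedAddCommGroup V] [NormedSpace ℝ V] (f : V → ℝ) : Prop :=
  ∃ (Q : V →L[ℝ] V →L[ℝ] ℝ) (l : V →L[ℝ] ℝ) (c : ℝ), ∀ w, f w = Q w w + l w + c

/- ===== auxiliary machinery ===== -/

section LLHPAux

lemma LLHP_EV_norm_sq {ι : Type*} [Fintype ι] (v : EuclideanSpace ℝ ι) :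
    ‖v‖ ^ 2 = ∑ i, (v i) ^ 2 := by
  rw [EuclideanSpace.norm_eq, Real.sq_sqrt (by positivity)]
  simp [sq_abs]

/-- x-coordinate projection. -/
def LLHP_pX (K T : ℕ) (i : Fin (T + 2)) : EJ K T →L[ℝ] ℝ :=
  EuclideanSpace.proj (Sum.inl (Sum.inl i))

def LLHP_pZ (K T : ℕ) (i : Fin (T + 2)) : EJ K T →L[ℝ] ℝ :=
  EuclideanSpace.proj (Sum.inl (Sum.inr i))

def LLHP_pY (K T : ℕ) (p : Fin (T + 1) × Fin (K + 1)) : EJ K T →L[ℝ] ℝ :=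
  EuclideanSpace.proj (Sum.inr p)

/-- elementary tensor of two functionals. -/
def LLHP_tens {E : Type*} [NormedAddCommGroup E] [NormedSpace ℝ E] (f g : E →L[ℝ] ℝ) :
    E →L[ℝ] E →L[ℝ] ℝ := f.smulRight g

/-- The quadratic form of `ḡ^{sc}` as a continuous bilinear map. -/
def LLHP_QQ (K T : ℕ) : EJ K T →L[ℝ] EJ K T →L[ℝ] ℝ :=
  (1 / (2 * ((K + 1 : ℝ)) ^ 2)) • ∑ i : Fin (T + 2), LLHP_tens (LLHP_pZ K T i) (LLHP_pZ K T i)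
  - ∑ i : Fin (T + 2), LLHP_tens (LLHP_pX K T i) (LLHP_pZ K T i)
  + ∑ i : Fin (T + 1),
      ((1 / 2 : ℝ) • ∑ j : Fin K,
          LLHP_tens (LLHP_pY K T (i, j.castSucc) - LLHP_pY K T (i, j.succ))
               (LLHP_pY K T (i, j.castSucc) - LLHP_pY K T (i, j.succ))
        + (1 / (2 * ((K + 1 : ℝ)) ^ 2)) •
            ∑ j : Fin (K + 1), LLHP_tens (LLHP_pY K T (i, j)) (LLHP_pY K T (i, j))
        - LLHP_tens (LLHP_pX K T i.castSucc) (LLHP_pY K T (i, 0))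
        + LLHP_tens (LLHP_pX K T i.succ) (LLHP_pY K T (i, Fin.last K)))

lemma LLHP_QQ_apply (K T : ℕ) (u v : EJ K T) :
    LLHP_QQ K T u v =
      (1 / (2 * ((K + 1 : ℝ)) ^ 2)) *
          ∑ i : Fin (T + 2), (u (Sum.inl (Sum.inr i))) * (v (Sum.inl (Sum.inr i)))
      - ∑ i : Fin (T + 2), u (Sum.inl (Sum.inl i)) * v (Sum.inl (Sum.inr i))
      + ∑ i : Fin (T + 1),
          ((1 / 2) * ∑ j : Fin K,
              (u (Sum.inr (i, j.castSucc)) - u (Sum.inr (i, j.succ))) *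
                (v (Sum.inr (i, j.castSucc)) - v (Sum.inr (i, j.succ)))
            + (1 / (2 * ((K + 1 : ℝ)) ^ 2)) *
                ∑ j : Fin (K + 1), (u (Sum.inr (i, j))) * (v (Sum.inr (i, j)))
            - (u (Sum.inl (Sum.inl i.castSucc)) * v (Sum.inr (i, (0 : Fin (K + 1))))
               - u (Sum.inl (Sum.inl i.succ)) * v (Sum.inr (i, Fin.last K)))) := by
  simp only [LLHP_QQ, LLHP_tens, ContinuousLinearMap.add_apply, ContinuousLinearMap.sub_apply,
    ContinuousLinearMap.smul_apply, ContinuousLinearMap.coe_sum', Finset.sum_apply,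
    ContinuousLinearMap.smulRight_apply, PiLp.proj_apply, LLHP_pX, LLHP_pZ, LLHP_pY,
    smul_eq_mul, Finset.mul_sum]
  congr 1
  exact Finset.sum_congr rfl fun i _ => by ring

lemma LLHP_gbarJ_formula (K T : ℕ) (w : EJ K T) :
    gbarJ K T w =
      (1 / (2 * ((K + 1 : ℝ)) ^ 2)) * ∑ i : Fin (T + 2), (w (Sum.inl (Sum.inr i))) ^ 2
      - ∑ i : Fin (T + 2), w (Sum.inl (Sum.inl i)) * w (Sum.inl (Sum.inr i))
      + ∑ i : Fin (T + 1),
          ((1 / 2) * ∑ j : Fin K, (w (Sum.inr (i, j.castSucc)) - w (Sum.inr (i, j.succ))) ^ 2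
            + (1 / (2 * ((K + 1 : ℝ)) ^ 2)) * ∑ j : Fin (K + 1), (w (Sum.inr (i, j))) ^ 2
            - (w (Sum.inl (Sum.inl i.castSucc)) * w (Sum.inr (i, (0 : Fin (K + 1))))
               - w (Sum.inl (Sum.inl i.succ)) * w (Sum.inr (i, Fin.last K)))) := by
  simp only [gbarJ, gbar, hsc, jx, jz, jy, LLHP_EV_norm_sq, PiLp.inner_apply, RCLike.inner_apply,
    conj_trivial, PiLp.toLp_apply]
  congr 2
  exact Finset.sum_congr rfl fun i _ => mul_comm _ _

lemma LLHP_gbarJ_eq_QQ (K T : ℕ) (w : EJ K T) : gbarJ K T w = LLHP_QQ K T w w := by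
  rw [LLHP_gbarJ_formula, LLHP_QQ_apply]
  simp only [pow_two]

end LLHPAux


section LLHPAux2

lemma LLHP_chain (K : ℕ) (c : Fin (K + 1) → ℝ) :
    (∑ j : Fin K, (c j.castSucc - c j.succ) ^ 2) + (c 0) ^ 2 + (c (Fin.last K)) ^ 2
      ≤ 4 * ∑ j, (c j) ^ 2 := by
  have h1 : (∑ j : Fin K, (c j.castSucc - c j.succ) ^ 2)
      ≤ ∑ j : Fin K, (2 * (c j.castSucc) ^ 2 + 2 * (c j.succ) ^ 2) :=
    Finset.sum_le_sum fun j _ => by nlinarith [sq_nonneg (c j.castSucc + c j.succ)]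
  have h2 : ∑ j : Fin (K + 1), (c j) ^ 2
      = (∑ j : Fin K, (c j.castSucc) ^ 2) + (c (Fin.last K)) ^ 2 :=
    Fin.sum_univ_castSucc (f := fun j => (c j) ^ 2)
  have h3 : ∑ j : Fin (K + 1), (c j) ^ 2 = (c 0) ^ 2 + ∑ j : Fin K, (c j.succ) ^ 2 :=
    Fin.sum_univ_succ (f := fun j => (c j) ^ 2)
  have h4 : ∑ j : Fin K, (2 * (c j.castSucc) ^ 2 + 2 * (c j.succ) ^ 2)
      = 2 * (∑ j : Fin K, (c j.castSucc) ^ 2) + 2 * ∑ j : Fin K, (c j.succ) ^ 2 := by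
    rw [Finset.sum_add_distrib, Finset.mul_sum, Finset.mul_sum]
  have h5 := sq_nonneg (c 0)
  have h6 := sq_nonneg (c (Fin.last K))
  linarith

lemma LLHP_absmul (x y : ℝ) : |x * y| ≤ x ^ 2 / 2 + y ^ 2 / 2 := by
  rcases abs_cases (x * y) with ⟨h, _⟩ | ⟨h, _⟩ <;> nlinarith [sq_nonneg (x - y), sq_nonneg (x + y)]

lemma LLHP_diag_scalar (K T : ℕ) (k : ℝ) (hk : 1 ≤ k ^ 2)
    (a b : Fin (T + 2) → ℝ) (c : Fin (T + 1) → Fin (K + 1) → ℝ) :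
    |(1 / (2 * k ^ 2)) * ∑ i, (b i) ^ 2 - ∑ i, a i * b i
      + ∑ i : Fin (T + 1),
          ((1 / 2 : ℝ) * ∑ j : Fin K, (c i j.castSucc - c i j.succ) ^ 2
            + (1 / (2 * k ^ 2)) * ∑ j, (c i j) ^ 2
            - (a i.castSucc * c i 0 - a i.succ * c i (Fin.last K)))|
      ≤ 5 / 2 * ((∑ i, (a i) ^ 2) + (∑ i, (b i) ^ 2)
          + ∑ i : Fin (T + 1), ∑ j, (c i j) ^ 2) := by
  have hk0 : (0:ℝ) < k ^ 2 := by nlinarith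
  have hblock : ∀ i : Fin (T + 1),
      |(1 / 2 : ℝ) * ∑ j : Fin K, (c i j.castSucc - c i j.succ) ^ 2
        + (1 / (2 * k ^ 2)) * ∑ j, (c i j) ^ 2
        - (a i.castSucc * c i 0 - a i.succ * c i (Fin.last K))|
      ≤ 5 / 2 * (∑ j, (c i j) ^ 2) + (a i.castSucc) ^ 2 / 2 + (a i.succ) ^ 2 / 2 := by
    intro i
    have hch := LLHP_chain K (c i)
    have hS : (0:ℝ) ≤ ∑ j, (c i j) ^ 2 := by positivity
    have hL : (0:ℝ) ≤ ∑ j : Fin K, (c i j.castSucc - c i j.succ) ^ 2 := by positivity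
    have h1 : |a i.castSucc * c i 0 - a i.succ * c i (Fin.last K)|
        ≤ ((a i.castSucc) ^ 2 / 2 + (c i 0) ^ 2 / 2)
          + ((a i.succ) ^ 2 / 2 + (c i (Fin.last K)) ^ 2 / 2) :=
      le_trans (abs_sub _ _) (add_le_add (LLHP_absmul _ _) (LLHP_absmul _ _))
    have h2 : (1 / (2 * k ^ 2)) * ∑ j, (c i j) ^ 2 ≤ (1 / 2) * ∑ j, (c i j) ^ 2 := by
      apply mul_le_mul_of_nonneg_right _ hS
      rw [div_le_div_iff₀ (by positivity) (by norm_num)]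
      nlinarith
    have h3 : (0:ℝ) ≤ (1 / (2 * k ^ 2)) * ∑ j, (c i j) ^ 2 := by positivity
    have htri := abs_add_le ((1 / 2 : ℝ) * ∑ j : Fin K, (c i j.castSucc - c i j.succ) ^ 2
        + (1 / (2 * k ^ 2)) * ∑ j, (c i j) ^ 2)
        (-(a i.castSucc * c i 0 - a i.succ * c i (Fin.last K)))
    rw [abs_neg] at htri
    have habs : |(1 / 2 : ℝ) * ∑ j : Fin K, (c i j.castSucc - c i j.succ) ^ 2
        + (1 / (2 * k ^ 2)) * ∑ j, (c i j) ^ 2|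
        = (1 / 2 : ℝ) * ∑ j : Fin K, (c i j.castSucc - c i j.succ) ^ 2
          + (1 / (2 * k ^ 2)) * ∑ j, (c i j) ^ 2 := abs_of_nonneg (by positivity)
    rw [habs] at htri
    have hfin : (1 / 2 : ℝ) * ∑ j : Fin K, (c i j.castSucc - c i j.succ) ^ 2
        + (1 / (2 * k ^ 2)) * ∑ j, (c i j) ^ 2
        + |a i.castSucc * c i 0 - a i.succ * c i (Fin.last K)|
        ≤ 5 / 2 * (∑ j, (c i j) ^ 2) + (a i.castSucc) ^ 2 / 2 + (a i.succ) ^ 2 / 2 := by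
      linarith
    calc |(1 / 2 : ℝ) * ∑ j : Fin K, (c i j.castSucc - c i j.succ) ^ 2
          + (1 / (2 * k ^ 2)) * ∑ j, (c i j) ^ 2
          - (a i.castSucc * c i 0 - a i.succ * c i (Fin.last K))| ≤ _ := by
            rw [sub_eq_add_neg]; exact htri
      _ ≤ _ := hfin
  have hA : (0:ℝ) ≤ ∑ i, (a i) ^ 2 := by positivity
  have hB : (0:ℝ) ≤ ∑ i, (b i) ^ 2 := by positivity
  have hC : (0:ℝ) ≤ ∑ i : Fin (T + 1), ∑ j, (c i j) ^ 2 := by positivity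
  have hsum1 : |∑ i : Fin (T + 2), a i * b i| ≤ (∑ i, (a i) ^ 2) / 2 + (∑ i, (b i) ^ 2) / 2 := by
    calc |∑ i : Fin (T + 2), a i * b i| ≤ ∑ i, |a i * b i| := Finset.abs_sum_le_sum_abs _ _
      _ ≤ ∑ i, ((a i) ^ 2 / 2 + (b i) ^ 2 / 2) := Finset.sum_le_sum fun i _ => LLHP_absmul _ _
      _ = (∑ i, (a i) ^ 2) / 2 + (∑ i, (b i) ^ 2) / 2 := by
          rw [Finset.sum_add_distrib, ← Finset.sum_div, ← Finset.sum_div]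
  have hsum3 : |∑ i : Fin (T + 1),
      ((1 / 2 : ℝ) * ∑ j : Fin K, (c i j.castSucc - c i j.succ) ^ 2
        + (1 / (2 * k ^ 2)) * ∑ j, (c i j) ^ 2
        - (a i.castSucc * c i 0 - a i.succ * c i (Fin.last K)))|
      ≤ ∑ i : Fin (T + 1), (5 / 2 * (∑ j, (c i j) ^ 2) + (a i.castSucc) ^ 2 / 2
          + (a i.succ) ^ 2 / 2) :=
    le_trans (Finset.abs_sum_le_sum_abs _ _) (Finset.sum_le_sum fun i _ => hblock i)
  have hsplit : ∑ i : Fin (T + 1), (5 / 2 * (∑ j, (c i j) ^ 2) + (a i.castSucc) ^ 2 / 2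
      + (a i.succ) ^ 2 / 2)
      = 5 / 2 * (∑ i : Fin (T + 1), ∑ j, (c i j) ^ 2)
        + (∑ i : Fin (T + 1), (a i.castSucc) ^ 2) / 2
        + (∑ i : Fin (T + 1), (a i.succ) ^ 2) / 2 := by
    rw [Finset.sum_add_distrib, Finset.sum_add_distrib, Finset.mul_sum, ← Finset.sum_div,
      ← Finset.sum_div]
  have hcs : ∑ i : Fin (T + 1), (a i.castSucc) ^ 2 ≤ ∑ i, (a i) ^ 2 := by
    rw [Fin.sum_univ_castSucc (f := fun i => (a i) ^ 2)]
    nlinarith [sq_nonneg (a (Fin.last (T + 1)))]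
  have hsc2 : ∑ i : Fin (T + 1), (a i.succ) ^ 2 ≤ ∑ i, (a i) ^ 2 := by
    rw [Fin.sum_univ_succ (f := fun i => (a i) ^ 2)]
    nlinarith [sq_nonneg (a 0)]
  have hfirst : (1 / (2 * k ^ 2)) * ∑ i, (b i) ^ 2 ≤ (1 / 2) * ∑ i, (b i) ^ 2 := by
    apply mul_le_mul_of_nonneg_right _ hB
    rw [div_le_div_iff₀ (by positivity) (by norm_num)]
    nlinarith
  have h0 : (0:ℝ) ≤ (1 / (2 * k ^ 2)) * ∑ i, (b i) ^ 2 := by positivity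
  have htri1 := abs_add_le ((1 / (2 * k ^ 2)) * ∑ i, (b i) ^ 2 - ∑ i, a i * b i)
      (∑ i : Fin (T + 1),
        ((1 / 2 : ℝ) * ∑ j : Fin K, (c i j.castSucc - c i j.succ) ^ 2
          + (1 / (2 * k ^ 2)) * ∑ j, (c i j) ^ 2
          - (a i.castSucc * c i 0 - a i.succ * c i (Fin.last K))))
  have htri2 := abs_sub ((1 / (2 * k ^ 2)) * ∑ i, (b i) ^ 2) (∑ i, a i * b i)
  rw [abs_of_nonneg h0] at htri2
  have hcssc := hsplit ▸ hsum3
  linarith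

lemma LLHP_diag (K T : ℕ) (w : EJ K T) : |gbarJ K T w| ≤ 5 / 2 * ‖w‖ ^ 2 := by
  have hw : ‖w‖ ^ 2 = (∑ i, (w (Sum.inl (Sum.inl i))) ^ 2)
      + (∑ i, (w (Sum.inl (Sum.inr i))) ^ 2)
      + ∑ i : Fin (T + 1), ∑ j, (w (Sum.inr (i, j))) ^ 2 := by
    rw [LLHP_EV_norm_sq, Fintype.sum_sum_type, Fintype.sum_sum_type, Fintype.sum_prod_type]
  rw [LLHP_gbarJ_formula, hw]
  exact LLHP_diag_scalar K T ((K + 1 : ℝ)) (by nlinarith [Nat.cast_nonneg (α := ℝ) K])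
    (fun i => w (Sum.inl (Sum.inl i))) (fun i => w (Sum.inl (Sum.inr i)))
    (fun i j => w (Sum.inr (i, j)))

end LLHPAux2

section LLHPAux3

open ContinuousLinearMap in
/-- The (constant) Hessian operator. -/
def LLHP_DD (K T : ℕ) : EJ K T →L[ℝ] EJ K T →L[ℝ] ℝ := LLHP_QQ K T + (LLHP_QQ K T).flip

lemma LLHP_hasFDerivAt (K T : ℕ) (w : EJ K T) :
    HasFDerivAt (gbarJ K T) (LLHP_DD K T w) w := by
  have hfun : gbarJ K T = (fun p : EJ K T × EJ K T => LLHP_QQ K T p.1 p.2) ∘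
      (fun w : EJ K T => (w, w)) := by
    funext w; exact LLHP_gbarJ_eq_QQ K T w
  have h2 : HasFDerivAt (fun x : EJ K T => (x, x))
      ((ContinuousLinearMap.id ℝ (EJ K T)).prod (ContinuousLinearMap.id ℝ (EJ K T))) w :=
    HasFDerivAt.prodMk (hasFDerivAt_id w) (hasFDerivAt_id w)
  have h1 : HasFDerivAt ((fun p : EJ K T × EJ K T => LLHP_QQ K T p.1 p.2) ∘
      (fun x : EJ K T => (x, x)))
      (((LLHP_QQ K T).isBoundedBilinearMap.deriv (w, w)).comp
        ((ContinuousLinearMap.id ℝ (EJ K T)).prod (ContinuousLinearMap.id ℝ (EJ K T)))) w :=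
    HasFDerivAt.comp w ((LLHP_QQ K T).isBoundedBilinearMap.hasFDerivAt (w, w)) h2
  rw [← hfun] at h1
  have heq : (((LLHP_QQ K T).isBoundedBilinearMap.deriv (w, w)).comp
      ((ContinuousLinearMap.id ℝ (EJ K T)).prod (ContinuousLinearMap.id ℝ (EJ K T))))
      = LLHP_DD K T w := by
    ext u
    simp [LLHP_DD, IsBoundedBilinearMap.deriv_apply, ContinuousLinearMap.add_apply,
      ContinuousLinearMap.flip_apply]
  rw [heq] at h1
  exact h1

lemma LLHP_gradient_eq (K T : ℕ) (w : EJ K T) :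
    gradient (gbarJ K T) w =
      (InnerProductSpace.toDual ℝ (EJ K T)).symm (LLHP_DD K T w) := by
  exact ((LLHP_hasFDerivAt K T w).hasGradientAt).gradient

set_option maxHeartbeats 1000000 in
lemma LLHP_Sbound (K T : ℕ) (u v : EJ K T) :
    LLHP_QQ K T u v + LLHP_QQ K T v u ≤ 5 * (‖u‖ * ‖v‖) := by
  have hdiag : ∀ w : EJ K T, LLHP_QQ K T w w + LLHP_QQ K T w w ≤ 5 * ‖w‖ ^ 2 := by
    intro w
    have h := LLHP_diag K T w
    rw [LLHP_gbarJ_eq_QQ] at h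
    have := abs_le.1 h
    linarith [this.2]
  by_cases hu : u = 0
  · rw [hu]
    simp only [map_zero, ContinuousLinearMap.zero_apply, norm_zero, zero_mul, mul_zero]
    norm_num
  by_cases hv : v = 0
  · rw [hv]
    simp only [map_zero, ContinuousLinearMap.zero_apply, norm_zero, zero_mul, mul_zero]
    norm_num
  have hun : 0 < ‖u‖ := norm_pos_iff.2 hu
  have hvn : 0 < ‖v‖ := norm_pos_iff.2 hv
  set t : ℝ := Real.sqrt (‖v‖ / ‖u‖) with htdef
  have ht : 0 < t := Real.sqrt_pos.2 (div_pos hvn hun)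
  have ht2 : t ^ 2 = ‖v‖ / ‖u‖ := Real.sq_sqrt (le_of_lt (div_pos hvn hun))
  set a : EJ K T := t • u with hadef
  set b : EJ K T := t⁻¹ • v with hbdef
  have hab : LLHP_QQ K T a b + LLHP_QQ K T b a = LLHP_QQ K T u v + LLHP_QQ K T v u := by
    have hmul : t * t⁻¹ = 1 := mul_inv_cancel₀ ht.ne'
    simp only [hadef, hbdef, map_smul, ContinuousLinearMap.smul_apply, smul_eq_mul]
    rw [← mul_assoc, ← mul_assoc, inv_mul_cancel₀ ht.ne', mul_inv_cancel₀ ht.ne', one_mul, one_mul]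
  have hpol : 4 * (LLHP_QQ K T a b + LLHP_QQ K T b a) =
      (LLHP_QQ K T (a + b) (a + b) + LLHP_QQ K T (a + b) (a + b))
        - (LLHP_QQ K T (a - b) (a - b) + LLHP_QQ K T (a - b) (a - b)) := by
    simp only [map_add, map_sub, ContinuousLinearMap.add_apply, ContinuousLinearMap.sub_apply]
    ring
  have h1 := hdiag (a + b)
  have h2 : -(5 * ‖a - b‖ ^ 2) ≤ LLHP_QQ K T (a - b) (a - b) + LLHP_QQ K T (a - b) (a - b) := by
    have h := LLHP_diag K T (a - b)
    rw [LLHP_gbarJ_eq_QQ] at h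
    have := abs_le.1 h
    linarith [this.1]
  have hpar : ‖a + b‖ ^ 2 + ‖a - b‖ ^ 2 = 2 * (‖a‖ ^ 2 + ‖b‖ ^ 2) := by
    have := parallelogram_law_with_norm ℝ a b
    nlinarith [this]
  have hna : ‖a‖ ^ 2 = ‖u‖ * ‖v‖ := by
    rw [hadef, norm_smul, Real.norm_eq_abs, abs_of_pos ht, mul_pow, ht2]
    field_simp
  have hnb : ‖b‖ ^ 2 = ‖u‖ * ‖v‖ := by
    rw [hbdef, norm_smul, Real.norm_eq_abs, abs_of_pos (inv_pos.2 ht), mul_pow, inv_pow, ht2]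
    field_simp
  nlinarith [hab, hpol, h1, h2, hpar, hna, hnb]

lemma LLHP_lipschitz (K T : ℕ) (w₁ w₂ : EJ K T) :
    ‖gradient (gbarJ K T) w₁ - gradient (gbarJ K T) w₂‖ ≤ 5 * ‖w₁ - w₂‖ := by
  set v : EJ K T := w₁ - w₂ with hv
  set g : EJ K T := (InnerProductSpace.toDual ℝ (EJ K T)).symm (LLHP_DD K T v) with hg
  have hdiff : gradient (gbarJ K T) w₁ - gradient (gbarJ K T) w₂ = g := by
    rw [LLHP_gradient_eq, LLHP_gradient_eq, hg, hv, map_sub, map_sub]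
  rw [hdiff]
  have hip : ‖g‖ ^ 2 = LLHP_DD K T v g := by
    rw [← real_inner_self_eq_norm_sq]
    exact InnerProductSpace.toDual_symm_apply
  have hDD : LLHP_DD K T v g = LLHP_QQ K T v g + LLHP_QQ K T g v := by
    simp [LLHP_DD, ContinuousLinearMap.add_apply, ContinuousLinearMap.flip_apply]
  have hb : ‖g‖ ^ 2 ≤ 5 * (‖v‖ * ‖g‖) := by
    rw [hip, hDD]; exact LLHP_Sbound K T v g
  rcases eq_or_lt_of_le (norm_nonneg g) with h0 | h0
  · rw [← h0]; positivity
  · nlinarith [hb, h0]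

lemma LLHP_iterated (K T : ℕ) (n : ℕ) (hn : 3 ≤ n) :
    iteratedFDeriv ℝ n (gbarJ K T) = 0 := by
  obtain ⟨m, rfl⟩ : ∃ m, n = m + 3 := ⟨n - 3, by omega⟩
  have hfd : (fun y => fderiv ℝ (gbarJ K T) y) = fun w => LLHP_DD K T w :=
    funext fun w => (LLHP_hasFDerivAt K T w).fderiv
  funext x
  ext v
  change iteratedFDeriv ℝ ((m + 2) + 1) (gbarJ K T) x v = 0
  rw [iteratedFDeriv_succ_apply_right, hfd]
  rw [iteratedFDeriv_succ_apply_right]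
  have hfd2 : (fun y => fderiv ℝ (fun w : EJ K T => LLHP_DD K T w) y) = fun _ => LLHP_DD K T := by
    funext y
    exact (LLHP_DD K T).fderiv
  rw [hfd2, iteratedFDeriv_const_of_ne (Nat.succ_ne_zero m)]
  simp

end LLHPAux3

section LLHPAux4

lemma LLHP_convexOn_CLM {E : Type*} [NormedAddCommGroup E] [NormedSpace ℝ E] (L : E →L[ℝ] ℝ) :
    ConvexOn ℝ Set.univ (fun v => L v) := by
  refine ⟨convex_univ, fun u _ v _ a b _ _ _ => ?_⟩
  simp [map_add, map_smul, smul_eq_mul]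

lemma LLHP_convexOn_sum {E : Type*} [NormedAddCommGroup E] [NormedSpace ℝ E]
    {ι : Type*} (s : Finset ι) (f : ι → E → ℝ)
    (h : ∀ i ∈ s, ConvexOn ℝ Set.univ (f i)) :
    ConvexOn ℝ Set.univ (fun v => ∑ i ∈ s, f i v) := by
  have h0 : ConvexOn ℝ Set.univ (∑ i ∈ s, f i) :=
    Finset.sum_induction f _ (fun a b ha hb => ha.add hb)
      (convexOn_const (0 : ℝ) convex_univ) h
  have : (∑ i ∈ s, f i) = fun v => ∑ i ∈ s, f i v := by
    funext v; simp
  rwa [this] at h0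

lemma LLHP_convexOn_mul_sq {E : Type*} [NormedAddCommGroup E] [NormedSpace ℝ E]
    (c : ℝ) (hc : 0 ≤ c) (L : E →L[ℝ] ℝ) :
    ConvexOn ℝ Set.univ (fun v => c * (L v) ^ 2) := by
  refine ⟨convex_univ, fun u _ v _ a b ha hb hab => ?_⟩
  simp only [map_add, map_smul, smul_eq_mul]
  have hb1 : b = 1 - a := by linarith
  subst hb1
  nlinarith [mul_nonneg (mul_nonneg (mul_nonneg ha hb) hc) (sq_nonneg (L u - L v))]

set_option maxHeartbeats 1000000 in
lemma LLHP_strong (K T : ℕ) (x : EV (T + 2)) :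
    StrongConvexOn Set.univ (1 / ((K + 1 : ℝ)) ^ 2)
      (fun v : EZY K T =>
        gbar K T x (WithLp.toLp 2 (fun i => v (Sum.inl i))) (WithLp.toLp 2 (fun p => v (Sum.inr p)))) := by
  set pzy : Fin (T + 2) ⊕ (Fin (T + 1) × Fin (K + 1)) → (EZY K T →L[ℝ] ℝ) :=
    fun s => EuclideanSpace.proj s with hpzy
  set L : EZY K T →L[ℝ] ℝ :=
    - (∑ i : Fin (T + 2), x i • pzy (Sum.inl i))
    - ∑ i : Fin (T + 1), (x i.castSucc • pzy (Sum.inr (i, (0 : Fin (K + 1))))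
        - x i.succ • pzy (Sum.inr (i, Fin.last K))) with hL
  have hfe : (fun v : EZY K T =>
      gbar K T x (WithLp.toLp 2 (fun i => v (Sum.inl i))) (WithLp.toLp 2 (fun p => v (Sum.inr p)))
        - 1 / ((K + 1 : ℝ)) ^ 2 / 2 * ‖v‖ ^ 2)
      = fun v => L v + ∑ i : Fin (T + 1), ∑ j : Fin K,
          (1 / 2 : ℝ) * ((pzy (Sum.inr (i, j.castSucc)) - pzy (Sum.inr (i, j.succ))) v) ^ 2 := by
    funext v
    simp only [gbar, hsc, LLHP_EV_norm_sq, PiLp.inner_apply, RCLike.inner_apply, conj_trivial,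
      hL, hpzy, ContinuousLinearMap.coe_sub', ContinuousLinearMap.coe_neg',
      ContinuousLinearMap.sub_apply, ContinuousLinearMap.neg_apply,
      ContinuousLinearMap.smul_apply, ContinuousLinearMap.coe_sum', Finset.sum_apply,
      PiLp.proj_apply, PiLp.toLp_apply, smul_eq_mul, Fintype.sum_sum_type, Fintype.sum_prod_type,
      Pi.sub_apply, Pi.neg_apply]
    simp only [Finset.sum_sub_distrib, Finset.sum_add_distrib, ← Finset.mul_sum]
    rw [show ∑ i, v (Sum.inl i) * x i = ∑ i, x i * v (Sum.inl i) from
      Finset.sum_congr rfl fun i _ => mul_comm _ _]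
    generalize ((K : ℝ) + 1) ^ 2 = A
    ring
  refine strongConvexOn_iff_convex.mpr ?_
  have hconv : ConvexOn ℝ Set.univ (fun v : EZY K T => L v + ∑ i : Fin (T + 1), ∑ j : Fin K,
      (1 / 2 : ℝ) * ((pzy (Sum.inr (i, j.castSucc)) - pzy (Sum.inr (i, j.succ))) v) ^ 2) := by
    refine (LLHP_convexOn_CLM L).add ?_
    refine LLHP_convexOn_sum _ _ fun i _ => ?_
    refine LLHP_convexOn_sum _ _ fun j _ => ?_
    exact LLHP_convexOn_mul_sq _ (by norm_num) _
  exact hfe ▸ hconv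

end LLHPAux4

/-- **Properties of the lower-level hard instance** (Lemma 5, items on `ḡ^{sc}`):
`ḡ^{sc}` is quadratic, its joint gradient is `5`-Lipschitz, all derivatives of order
at least three vanish, and for every fixed `x` it is `(1/K²)`-strongly convex
jointly in `(z,y)`.  Here `K` is `K'+1 ≥ 1` and `T` is `T'+2 ≥ 2`. -/
theorem lower_level_hard_instance_properties (K' T' : ℕ) :
    IsQuadratic (gbarJ K' T') ∧
    (∀ w₁ w₂ : EJ K' T',
      ‖gradient (gbarJ K' T') w₁ - gradient (gbarJ K' T') w₂‖ ≤ 5 * ‖w₁ - w₂‖) ∧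
    (∀ n : ℕ, 3 ≤ n → iteratedFDeriv ℝ n (gbarJ K' T') = 0) ∧
    (∀ x : EV (T' + 2),
      StrongConvexOn Set.univ (1 / ((K' + 1 : ℝ)) ^ 2)
        (fun v : EZY K' T' =>
          gbar K' T' x (WithLp.toLp 2 (fun i => v (Sum.inl i))) (WithLp.toLp 2 (fun p => v (Sum.inr p))))) := by
  refine ⟨⟨LLHP_QQ K' T', 0, 0, fun w => by
      simp [LLHP_gbarJ_eq_QQ K' T' w]⟩,
    LLHP_lipschitz K' T', fun n hn => LLHP_iterated K' T' n hn, LLHP_strong K' T'⟩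
end
end

section
/- Lemma 6 (hyperfunc): let K ≥ 10 and T ≥ 2 be integers and let (z*(x), y*(x)) denote the unique minimizer of (z,y) ↦ ḡ^{sc}(x,z,y). Then the coefficients a_K = (1/K)(1 − B_{1,1}/B_{1,K}) and b_K = K/B_{1,K} satisfy |a_K| ≤ 20 and |b_K| ≤ 10, and for every x ∈ ℝ^T one has H(x) := h(z*(x), y*(x)) = (K³/2) Σ_{i=1}^{T−1} (x_i − x_{i+1})². -/
noncomputable section
open scoped RealInnerProductSpace

namespace Hyper
open Matrix

/-- ℕ-level Abel summation identity. -/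
lemma abel_nat (n : ℕ) (hn : 1 ≤ n) (f : ℕ → ℝ) :
    ∑ i ∈ Finset.range (n+1), f i *
      ((if i = 0 ∨ i = n then (1:ℝ) else 2) * f i
        - (if i < n then f (i+1) else 0) - (if 1 ≤ i then f (i-1) else 0))
    = ∑ j ∈ Finset.range n, (f j - f (j+1))^2 := by
  induction n with
  | zero => omega
  | succ m ih =>
    rcases Nat.eq_or_lt_of_le hn with h1 | h2
    · -- m = 0 case: n = 1
      have hm : m = 0 := by omega
      subst hm
      simp [Finset.sum_range_succ]
      ring
    · have hm : 1 ≤ m := by omega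
      rw [Finset.sum_range_succ, Finset.sum_range_succ (fun j => (f j - f (j+1))^2)]
      rw [Finset.sum_range_succ]
      have hcongr : ∑ i ∈ Finset.range m, f i *
          ((if i = 0 ∨ i = m + 1 then (1:ℝ) else 2) * f i
            - (if i < m + 1 then f (i+1) else 0) - (if 1 ≤ i then f (i-1) else 0))
          = ∑ i ∈ Finset.range m, f i *
          ((if i = 0 ∨ i = m then (1:ℝ) else 2) * f i
            - (if i < m then f (i+1) else 0) - (if 1 ≤ i then f (i-1) else 0)) := by
        apply Finset.sum_congr rfl
        intro i hi
        rw [Finset.mem_range] at hi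
        have h0 : (i = 0 ∨ i = m + 1) ↔ (i = 0 ∨ i = m) := by omega
        simp only [h0, if_pos (show i < m + 1 by omega), if_pos (show i < m by omega)]
      rw [hcongr]
      have ihs := ih hm
      rw [Finset.sum_range_succ] at ihs
      -- from ihs : Σ_{range m} g_m + g_m(m) = Σ_{range m} rhs
      have hgm : f m * ((if m = 0 ∨ m = m then (1:ℝ) else 2) * f m
            - (if m < m then f (m+1) else 0) - (if 1 ≤ m then f (m-1) else 0))
          = f m * (f m - f (m-1)) := by
        have : (m = 0 ∨ m = m) := Or.inr rfl
        simp [this, hm]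
      rw [hgm] at ihs
      have e1 : (m = 0 ∨ m = m + 1) = False := by simp; omega
      have e2 : (m + 1 = 0 ∨ m + 1 = m + 1) = True := by simp
      simp only [e1, e2, if_false, if_true, hm, if_pos (by omega : m < m + 1),
        if_neg (by omega : ¬ (m + 1 < m + 1)), if_pos (by omega : 1 ≤ m),
        if_pos (by omega : 1 ≤ m + 1), Nat.add_sub_cancel, or_true]
      linear_combination ihs



/-- collapse lemma over `range n` with ℕ-condition -/
lemma sum_collapse (n a : ℕ) (g : ℕ → ℝ) :
    (∑ j ∈ Finset.range n, if j = a then g j else 0) = if a < n then g a else 0 := by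
  rw [Finset.sum_ite_eq' (Finset.range n) a g]
  simp [Finset.mem_range]

/-- mulVec formula for `AK` in terms of a total extension `W : ℕ → ℝ` of `w`. -/
lemma AK_mulVec (K : ℕ) (W : ℕ → ℝ) (i : Fin (K + 1)) :
    (AK K).mulVec (fun j => W j) i
      = (if (i:ℕ) = 0 ∨ (i:ℕ) = K then 1 else 2) * W i
        - (if (i:ℕ) < K then W (i+1) else 0)
        - (if 1 ≤ (i:ℕ) then W ((i:ℕ)-1) else 0) := by
  have key : ∀ j : Fin (K+1), AK K i j * W j
      = (if (j:ℕ) = (i:ℕ) then (if (i:ℕ) = 0 ∨ (i:ℕ) = K then 1 else 2) * W j else 0)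
        + (if (j:ℕ) = (i:ℕ)+1 then -W j else 0)
        + (if (j:ℕ)+1 = (i:ℕ) then -W j else 0) := by
    intro j
    simp only [AK, Fin.ext_iff]
    split_ifs <;> first | ring1 | (exfalso; omega)
  show (∑ j : Fin (K+1), AK K i j * W j) = _
  rw [Finset.sum_congr rfl (fun j _ => key j)]
  rw [Finset.sum_add_distrib, Finset.sum_add_distrib]
  have s1 : (∑ j : Fin (K+1), if (j:ℕ) = (i:ℕ) then (if (i:ℕ) = 0 ∨ (i:ℕ) = K then 1 else 2) * W j else 0)
      = (if (i:ℕ) = 0 ∨ (i:ℕ) = K then 1 else 2) * W i := by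
    rw [Fin.sum_univ_eq_sum_range (fun n => if n = (i:ℕ) then (if (i:ℕ) = 0 ∨ (i:ℕ) = K then 1 else 2) * W n else 0)]
    rw [sum_collapse]
    simp [i.isLt]
  have s2 : (∑ j : Fin (K+1), if (j:ℕ) = (i:ℕ)+1 then -W j else 0)
      = -(if (i:ℕ) < K then W ((i:ℕ)+1) else 0) := by
    rw [Fin.sum_univ_eq_sum_range (fun n => if n = (i:ℕ)+1 then -W n else 0)]
    rw [sum_collapse]
    split_ifs <;> simp_all <;> omega
  have s3 : (∑ j : Fin (K+1), if (j:ℕ)+1 = (i:ℕ) then -W j else 0)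
      = -(if 1 ≤ (i:ℕ) then W ((i:ℕ)-1) else 0) := by
    rcases Nat.eq_zero_or_pos (i:ℕ) with h0 | h1
    · rw [h0]
      simp
    · have : ∀ j : Fin (K+1), ((j:ℕ)+1 = (i:ℕ)) = ((j:ℕ) = (i:ℕ)-1) := by
        intro j; simp only [eq_iff_iff]; omega
      simp only [this]
      rw [Fin.sum_univ_eq_sum_range (fun n => if n = (i:ℕ)-1 then -W n else 0)]
      rw [sum_collapse]
      rw [if_pos (by omega : (i:ℕ)-1 < K+1), if_pos (show 1 ≤ (i:ℕ) by omega)]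
  rw [s1, s2, s3]
  ring

/-- quadratic form of `AK` -/
lemma AK_quadform (K : ℕ) (hK : 1 ≤ K) (w : Fin (K+1) → ℝ) :
    w ⬝ᵥ (AK K).mulVec w = ∑ j : Fin K, (w j.castSucc - w j.succ)^2 := by
  set W : ℕ → ℝ := fun n => if h : n < K+1 then w ⟨n, h⟩ else 0 with hW
  have hwW : w = fun j : Fin (K+1) => W j := by
    funext j; simp [hW, j.isLt]; intro h; have := j.isLt; omega
  have lhs : w ⬝ᵥ (AK K).mulVec w
      = ∑ i ∈ Finset.range (K+1), W i *
        ((if i = 0 ∨ i = K then (1:ℝ) else 2) * W i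
          - (if i < K then W (i+1) else 0) - (if 1 ≤ i then W (i-1) else 0)) := by
    rw [hwW]
    show (∑ i : Fin (K+1), W i * (AK K).mulVec (fun j => W j) i) = _
    rw [Finset.sum_congr rfl (fun i _ => by rw [AK_mulVec K W i])]
    rw [Fin.sum_univ_eq_sum_range (fun n => W n *
        ((if n = 0 ∨ n = K then (1:ℝ) else 2) * W n
          - (if n < K then W (n+1) else 0) - (if 1 ≤ n then W (n-1) else 0)))]
  rw [lhs, abel_nat K hK W]
  rw [← Fin.sum_univ_eq_sum_range (fun n => (W n - W (n+1))^2) K]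
  apply Finset.sum_congr rfl
  intro j _
  have h1 : W (j:ℕ) = w j.castSucc := by
    simp only [hW]
    rw [dif_pos (by omega : (j:ℕ) < K+1)]
    congr 1
  have h2 : W ((j:ℕ)+1) = w j.succ := by
    simp only [hW]
    rw [dif_pos (by omega : (j:ℕ)+1 < K+1)]
    congr 1
  rw [h1, h2]

lemma AK_symm (K : ℕ) (i j : Fin (K+1)) : AK K i j = AK K j i := by
  unfold AK
  by_cases h : i = j
  · subst h; simp
  · rw [if_neg h, if_neg (Ne.symm h)]
    exact if_congr or_comm rfl rfl

def Mmat (K : ℕ) : Matrix (Fin (K+1)) (Fin (K+1)) ℝ :=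
  ((K + 1 : ℝ))⁻¹ ^ 2 • (1 : Matrix (Fin (K + 1)) (Fin (K + 1)) ℝ) + AK K

lemma Mmat_symm (K : ℕ) (i j : Fin (K+1)) : Mmat K i j = Mmat K j i := by
  simp only [Mmat, Matrix.add_apply, Matrix.smul_apply, Matrix.one_apply, smul_eq_mul]
  rw [AK_symm]
  congr 2
  simp [eq_comm]

lemma Mmat_posdef (K : ℕ) (hK : 1 ≤ K) : (Mmat K).PosDef := by
  refine Matrix.posDef_iff_dotProduct_mulVec.mpr ⟨?_, ?_⟩
  · ext i j
    simp only [Matrix.conjTranspose_apply, star_trivial]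
    exact Mmat_symm K j i
  · intro x hx
    have hsx : star x = x := by funext i; simp
    rw [hsx, Mmat, Matrix.add_mulVec, Matrix.smul_mulVec, Matrix.one_mulVec,
      dotProduct_add, dotProduct_smul, AK_quadform K hK x]
    have h1 : 0 < x ⬝ᵥ x := by
      obtain ⟨i, hi⟩ : ∃ i, x i ≠ 0 := by
        by_contra hc
        push_neg at hc
        exact hx (funext hc)
      apply Finset.sum_pos' (fun j _ => mul_self_nonneg (x j))
      exact ⟨i, Finset.mem_univ i, mul_self_pos.mpr hi⟩
    have h2 : (0:ℝ) ≤ ∑ j : Fin K, (x j.castSucc - x j.succ)^2 :=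
      Finset.sum_nonneg (fun j _ => sq_nonneg _)
    have h3 : (0:ℝ) < ((K + 1 : ℝ))⁻¹ ^ 2 := by positivity
    have := mul_pos h3 h1
    simp only [smul_eq_mul]
    linarith

lemma Mmat_inv_mul (K : ℕ) (hK : 1 ≤ K) : (Mmat K)⁻¹ * Mmat K = 1 :=
  Matrix.nonsing_inv_mul _ (Mmat_posdef K hK).det_pos.ne'.isUnit

/-! ### The explicit solution via hyperbolic functions -/

def th (K : ℕ) : ℝ := 2 * Real.arsinh (1 / (2 * (K + 1 : ℝ)))

def SS (K : ℕ) : ℝ := Real.sinh (th K * (K + 1 : ℝ))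

def Wl (K : ℕ) (n : ℕ) : ℝ :=
  (K + 1 : ℝ) * Real.cosh (th K * ((K + 1 : ℝ) - 1/2 - n)) / SS K

def Wr (K : ℕ) (n : ℕ) : ℝ :=
  (K + 1 : ℝ) * Real.cosh (th K * ((n : ℝ) + 1/2)) / SS K

lemma N_pos (K : ℕ) : (0:ℝ) < (K + 1 : ℝ) := by positivity

lemma th_pos (K : ℕ) : 0 < th K := by
  have : (0:ℝ) < 1 / (2 * (K + 1 : ℝ)) := by positivity
  have := Real.arsinh_pos_iff.mpr this
  unfold th; linarith

lemma sinh_half_th (K : ℕ) : Real.sinh (th K / 2) = 1 / (2 * (K + 1 : ℝ)) := by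
  unfold th
  rw [show (2 * Real.arsinh (1 / (2 * (K + 1 : ℝ)))) / 2 = Real.arsinh (1 / (2 * (K + 1 : ℝ))) by ring]
  exact Real.sinh_arsinh _

lemma cosh_th (K : ℕ) :
    Real.cosh (th K) = 1 + 1 / (2 * (K + 1 : ℝ)^2) := by
  have h := Real.cosh_two_mul (th K / 2)
  rw [show 2 * (th K / 2) = th K by ring] at h
  rw [h, Real.cosh_sq, sinh_half_th]
  have : ((K:ℝ) + 1) ≠ 0 := (N_pos K).ne'
  field_simp
  ring

lemma sinh_th (K : ℕ) :
    Real.sinh (th K) = Real.cosh (th K / 2) / (K + 1 : ℝ) := by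
  have h := Real.sinh_two_mul (th K / 2)
  rw [show 2 * (th K / 2) = th K by ring] at h
  rw [h, sinh_half_th]
  field_simp

lemma th_le (K : ℕ) : th K * (K + 1 : ℝ) ≤ 1 := by
  have h1 : Real.arsinh (1 / (2 * (K + 1 : ℝ))) ≤ 1 / (2 * (K + 1 : ℝ)) := by
    have hx : (0:ℝ) < 1 / (2 * (K + 1 : ℝ)) := by positivity
    have h2 : (1 / (2 * (K + 1 : ℝ))) ≤ Real.sinh (1 / (2 * (K + 1 : ℝ))) :=
      (Real.self_lt_sinh_iff.mpr hx).le
    calc Real.arsinh (1 / (2 * (K + 1 : ℝ)))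
        ≤ Real.arsinh (Real.sinh (1 / (2 * (K + 1 : ℝ)))) := Real.arsinh_le_arsinh.mpr h2
      _ = 1 / (2 * (K + 1 : ℝ)) := Real.arsinh_sinh _
  have hN : (0:ℝ) < (K+1:ℝ) := N_pos K
  unfold th
  have := mul_le_mul_of_nonneg_right h1 hN.le
  calc 2 * Real.arsinh (1 / (2 * (K + 1 : ℝ))) * (K+1:ℝ)
      = 2 * (Real.arsinh (1 / (2 * (K + 1 : ℝ))) * (K+1:ℝ)) := by ring
    _ ≤ 2 * ((1 / (2 * (K + 1 : ℝ))) * (K+1:ℝ)) := by linarith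
    _ = 1 := by field_simp

lemma SS_pos (K : ℕ) : 0 < SS K := by
  unfold SS
  rw [show (0:ℝ) = Real.sinh 0 by rw [Real.sinh_zero]]
  apply Real.sinh_lt_sinh.mpr
  exact mul_pos (th_pos K) (N_pos K)

lemma SS_eq (K : ℕ) :
    SS K = Real.sinh (th K * ((K + 1 : ℝ) - 1/2)) * Real.cosh (th K / 2)
      + Real.cosh (th K * ((K + 1 : ℝ) - 1/2)) * (1 / (2 * (K + 1 : ℝ))) := by
  unfold SS
  rw [show th K * (K + 1 : ℝ) = th K * ((K + 1 : ℝ) - 1/2) + th K / 2 by ring]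
  rw [Real.sinh_add, sinh_half_th]


lemma frac_one (e x y S : ℝ) (hS : S ≠ 0) (h : e * x + (1 * x - y - 0) = S) :
    e * (x / S) + (1 * (x / S) - y / S - 0) = 1 := by
  have hh : e * (x / S) + (1 * (x / S) - y / S - 0) = (e * x + (1 * x - y - 0)) / S := by ring
  rw [hh, h, div_self hS]

lemma frac_oneR (e x y S : ℝ) (hS : S ≠ 0) (h : e * x + (1 * x - 0 - y) = S) :
    e * (x / S) + (1 * (x / S) - 0 - y / S) = 1 := by
  have hh : e * (x / S) + (1 * (x / S) - 0 - y / S) = (e * x + (1 * x - 0 - y)) / S := by ring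
  rw [hh, h, div_self hS]

lemma frac_zeroL (e x y S : ℝ) (h : e * x + (1 * x - y - 0) = 0) :
    e * (x / S) + (1 * (x / S) - y / S - 0) = 0 := by
  have hh : e * (x / S) + (1 * (x / S) - y / S - 0) = (e * x + (1 * x - y - 0)) / S := by ring
  rw [hh, h, zero_div]

lemma frac_zeroR (e x y S : ℝ) (h : e * x + (1 * x - 0 - y) = 0) :
    e * (x / S) + (1 * (x / S) - 0 - y / S) = 0 := by
  have hh : e * (x / S) + (1 * (x / S) - 0 - y / S) = (e * x + (1 * x - 0 - y)) / S := by ring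
  rw [hh, h, zero_div]

lemma frac_zeroM (e x y z S : ℝ) (h : e * x + (2 * x - y - z) = 0) :
    e * (x / S) + (2 * (x / S) - y / S - z / S) = 0 := by
  have hh : e * (x / S) + (2 * (x / S) - y / S - z / S) = (e * x + (2 * x - y - z)) / S := by ring
  rw [hh, h, zero_div]

lemma Ml (K : ℕ) (hK : 1 ≤ K) :
    (Mmat K).mulVec (fun j : Fin (K+1) => Wl K j) = Pi.single (0 : Fin (K+1)) 1 := by
  funext i
  rw [Mmat, Matrix.add_mulVec, Matrix.smul_mulVec, Matrix.one_mulVec]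
  rw [Pi.add_apply, Pi.smul_apply, smul_eq_mul]
  rw [AK_mulVec K (Wl K) i]
  have hS := (SS_pos K).ne'
  have hN := (N_pos K).ne'
  rw [Pi.single_apply]
  rcases Nat.eq_zero_or_pos (i:ℕ) with h0 | hpos
  · -- i = 0
    rw [h0]
    rw [if_pos (Or.inl rfl), if_pos (by omega : 0 < K), if_neg (by omega : ¬ (1 ≤ 0)),
      if_pos (show i = 0 by apply Fin.ext; simpa using h0)]
    unfold Wl
    have e1 : th K * ((K + 1 : ℝ) - 1/2 - ((0:ℕ):ℝ)) = th K * ((K + 1 : ℝ) - 1/2) := by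
      push_cast; ring
    have e2 : th K * ((K + 1 : ℝ) - 1/2 - ((0+1:ℕ):ℝ)) = th K * ((K + 1 : ℝ) - 1/2) - th K := by
      push_cast; ring
    rw [e1, e2]
    refine frac_one _ _ _ _ hS ?_
    rw [Real.cosh_sub, cosh_th, sinh_th, SS_eq]
    field_simp
    ring
  · rcases Nat.lt_or_ge (i:ℕ) K with hmid | hend
    · -- interior
      rw [if_neg (by omega), if_pos hmid, if_pos (show 1 ≤ (i:ℕ) by omega),
        if_neg (show ¬ i = 0 by rintro rfl; simp at hpos)]
      unfold Wl
      have e2 : th K * ((K + 1 : ℝ) - 1/2 - (((i:ℕ)+1:ℕ):ℝ))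
          = th K * ((K + 1 : ℝ) - 1/2 - ((i:ℕ):ℝ)) - th K := by push_cast; ring
      have e3 : th K * ((K + 1 : ℝ) - 1/2 - (((i:ℕ)-1:ℕ):ℝ))
          = th K * ((K + 1 : ℝ) - 1/2 - ((i:ℕ):ℝ)) + th K := by
        have : (((i:ℕ)-1:ℕ):ℝ) = ((i:ℕ):ℝ) - 1 := by
          have : (1:ℕ) ≤ (i:ℕ) := hpos
          push_cast [this]; ring
        rw [this]; ring
      rw [e2, e3]
      refine frac_zeroM _ _ _ _ _ ?_
      rw [Real.cosh_sub, Real.cosh_add, cosh_th, sinh_th]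
      field_simp
      ring
    · -- i = K
      have hiK : (i:ℕ) = K := by omega
      rw [hiK]
      rw [if_pos (Or.inr rfl), if_neg (lt_irrefl K), if_pos (by omega : 1 ≤ K),
        if_neg (show ¬ i = 0 by rintro rfl; simp at hpos)]
      unfold Wl
      have e1 : th K * ((K + 1 : ℝ) - 1/2 - ((K:ℕ):ℝ)) = th K / 2 := by push_cast; ring
      have e3 : th K * ((K + 1 : ℝ) - 1/2 - ((K-1:ℕ):ℝ)) = th K / 2 + th K := by
        have : ((K-1:ℕ):ℝ) = (K:ℝ) - 1 := by push_cast [hK]; ring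
        rw [this]; push_cast; ring
      rw [e1, e3]
      refine frac_zeroR _ _ _ _ ?_
      rw [Real.cosh_add, cosh_th, sinh_th, sinh_half_th]
      field_simp
      ring

lemma Mr (K : ℕ) (hK : 1 ≤ K) :
    (Mmat K).mulVec (fun j : Fin (K+1) => Wr K j) = Pi.single (Fin.last K) 1 := by
  funext i
  rw [Mmat, Matrix.add_mulVec, Matrix.smul_mulVec, Matrix.one_mulVec]
  rw [Pi.add_apply, Pi.smul_apply, smul_eq_mul]
  rw [AK_mulVec K (Wr K) i]
  have hS := (SS_pos K).ne'
  have hN := (N_pos K).ne'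
  rw [Pi.single_apply]
  rcases Nat.eq_zero_or_pos (i:ℕ) with h0 | hpos
  · -- i = 0
    rw [h0]
    rw [if_pos (Or.inl rfl), if_pos (by omega : 0 < K), if_neg (by omega : ¬ (1 ≤ 0)),
      if_neg (show ¬ i = Fin.last K by rw [Fin.ext_iff]; simp [Fin.last]; omega)]
    unfold Wr
    have e1 : th K * (((0:ℕ):ℝ) + 1/2) = th K / 2 := by push_cast; ring
    have e2 : th K * ((((0+1:ℕ)):ℝ) + 1/2) = th K / 2 + th K := by push_cast; ring
    rw [e1, e2]
    refine frac_zeroL _ _ _ _ ?_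
    rw [Real.cosh_add, cosh_th, sinh_th, sinh_half_th]
    field_simp
    ring
  · rcases Nat.lt_or_ge (i:ℕ) K with hmid | hend
    · -- interior
      rw [if_neg (by omega), if_pos hmid, if_pos (show 1 ≤ (i:ℕ) by omega),
        if_neg (show ¬ i = Fin.last K by rw [Fin.ext_iff]; simp [Fin.last]; omega)]
      unfold Wr
      have e2 : th K * ((((i:ℕ)+1:ℕ):ℝ) + 1/2) = th K * (((i:ℕ):ℝ) + 1/2) + th K := by
        push_cast; ring
      have e3 : th K * ((((i:ℕ)-1:ℕ):ℝ) + 1/2) = th K * (((i:ℕ):ℝ) + 1/2) - th K := by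
        have : (((i:ℕ)-1:ℕ):ℝ) = ((i:ℕ):ℝ) - 1 := by
          have : (1:ℕ) ≤ (i:ℕ) := hpos
          push_cast [this]; ring
        rw [this]; ring
      rw [e2, e3]
      refine frac_zeroM _ _ _ _ _ ?_
      rw [Real.cosh_sub, Real.cosh_add, cosh_th, sinh_th]
      field_simp
      ring
    · -- i = K
      have hiK : (i:ℕ) = K := by omega
      rw [hiK]
      rw [if_pos (Or.inr rfl), if_neg (lt_irrefl K), if_pos (by omega : 1 ≤ K),
        if_pos (show i = Fin.last K by rw [Fin.ext_iff]; simpa [Fin.last] using hiK)]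
      unfold Wr
      have e1 : th K * (((K:ℕ):ℝ) + 1/2) = th K * ((K + 1 : ℝ) - 1/2) := by push_cast; ring
      have e3 : th K * ((((K:ℕ)-1:ℕ):ℝ) + 1/2) = th K * ((K + 1 : ℝ) - 1/2) - th K := by
        have : ((K-1:ℕ):ℝ) = (K:ℝ) - 1 := by push_cast [hK]; ring
        rw [this]; push_cast; ring
      rw [e1, e3]
      refine frac_oneR _ _ _ _ hS ?_
      rw [Real.cosh_sub, cosh_th, sinh_th, SS_eq]
      field_simp
      ring

lemma col_left (K : ℕ) (hK : 1 ≤ K) (j : Fin (K+1)) : (Mmat K)⁻¹ j 0 = Wl K j := by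
  have h1 : (Mmat K)⁻¹.mulVec ((Mmat K).mulVec (fun j : Fin (K+1) => Wl K j))
      = fun j : Fin (K+1) => Wl K j := by
    rw [Matrix.mulVec_mulVec, Mmat_inv_mul K hK, Matrix.one_mulVec]
  rw [Ml K hK] at h1
  have h2 := congrFun h1 j
  rw [Matrix.mulVec_single] at h2
  simpa using h2

lemma col_right (K : ℕ) (hK : 1 ≤ K) (j : Fin (K+1)) :
    (Mmat K)⁻¹ j (Fin.last K) = Wr K j := by
  have h1 : (Mmat K)⁻¹.mulVec ((Mmat K).mulVec (fun j : Fin (K+1) => Wr K j))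
      = fun j : Fin (K+1) => Wr K j := by
    rw [Matrix.mulVec_mulVec, Mmat_inv_mul K hK, Matrix.one_mulVec]
  rw [Mr K hK] at h1
  have h2 := congrFun h1 j
  rw [Matrix.mulVec_single] at h2
  simpa using h2

lemma BK_eq (K : ℕ) : BK K = (Mmat K)⁻¹ := rfl

lemma Wr0_pos (K : ℕ) : 0 < Wr K 0 := by
  unfold Wr
  have := N_pos K
  have := SS_pos K
  have := Real.cosh_pos (x := th K * (((0:ℕ):ℝ) + 1/2))
  positivity

lemma cosh_one_lt_two : Real.cosh 1 < 2 := by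
  rw [Real.cosh_eq]
  have h1 := Real.exp_one_lt_d9
  have h2 : Real.exp (-1) < 1 := by
    rw [Real.exp_lt_one_iff]
    norm_num
  linarith

lemma SS_le_two (K : ℕ) : SS K ≤ 2 := by
  have h1 : SS K ≤ Real.sinh 1 := by
    unfold SS
    apply Real.sinh_le_sinh.mpr
    exact th_le K
  have h2 := Real.sinh_lt_cosh 1
  have h3 := cosh_one_lt_two
  linarith

lemma BK00 (K : ℕ) (hK : 1 ≤ K) : BK K 0 0 = Wl K 0 := by
  rw [BK_eq]; exact col_left K hK 0

lemma BK0L (K : ℕ) (hK : 1 ≤ K) : BK K 0 (Fin.last K) = Wr K 0 := by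
  rw [BK_eq]; exact col_right K hK 0

lemma ratio_bounds (K : ℕ) (hK : 1 ≤ K) :
    1 ≤ BK K 0 0 / BK K 0 (Fin.last K) ∧ BK K 0 0 / BK K 0 (Fin.last K) ≤ 2 := by
  rw [BK00 K hK, BK0L K hK]
  unfold Wl Wr
  have hN := N_pos K
  have hS := SS_pos K
  set cA := Real.cosh (th K * ((K + 1 : ℝ) - 1/2 - ((0:ℕ):ℝ))) with hcA
  set co := Real.cosh (th K * (((0:ℕ):ℝ) + 1/2)) with hco
  have hco1 : 1 ≤ co := Real.one_le_cosh _
  have hco0 : 0 < co := by linarith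
  have hratio : (K + 1 : ℝ) * cA / SS K / ((K + 1 : ℝ) * co / SS K) = cA / co := by
    field_simp
  rw [hratio]
  have hth := th_pos K
  have harg : 0 ≤ th K * ((K + 1 : ℝ) - 1/2 - ((0:ℕ):ℝ)) := by
    have : (0:ℝ) ≤ (K + 1 : ℝ) - 1/2 - ((0:ℕ):ℝ) := by push_cast; linarith
    positivity
  have hcoA : co ≤ cA := by
    rw [hcA, hco]
    apply Real.cosh_le_cosh.mpr
    rw [abs_of_nonneg harg, abs_of_nonneg (by positivity : (0:ℝ) ≤ th K * (((0:ℕ):ℝ) + 1/2))]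
    apply mul_le_mul_of_nonneg_left _ hth.le
    push_cast
    linarith
  have hcA2 : cA ≤ 2 := by
    have h1 : cA ≤ Real.cosh 1 := by
      rw [hcA]
      apply Real.cosh_le_cosh.mpr
      rw [abs_of_nonneg harg, abs_of_nonneg (by norm_num : (0:ℝ) ≤ 1)]
      have h2 := th_le K
      have : th K * ((K + 1 : ℝ) - 1/2 - ((0:ℕ):ℝ)) ≤ th K * (K + 1 : ℝ) := by
        apply mul_le_mul_of_nonneg_left _ hth.le
        push_cast; linarith
      linarith
    linarith [cosh_one_lt_two]
  constructor
  · rw [le_div_iff₀ hco0]; linarith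
  · rw [div_le_iff₀ hco0]; nlinarith

lemma aK_abs (K : ℕ) (hK : 1 ≤ K) : |aK K| ≤ 20 := by
  obtain ⟨h1, h2⟩ := ratio_bounds K hK
  unfold aK
  have hN := N_pos K
  have hNe : (1:ℝ) ≤ (K + 1 : ℝ) := by push_cast; linarith
  rw [abs_mul]
  have ha : |1 / (K + 1 : ℝ)| ≤ 1 := by
    rw [abs_of_pos (by positivity)]
    rw [div_le_one hN]; linarith
  have hb : |1 - BK K 0 0 / BK K 0 (Fin.last K)| ≤ 1 := by
    rw [abs_le]; constructor <;> linarith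
  calc |1 / (K + 1 : ℝ)| * |1 - BK K 0 0 / BK K 0 (Fin.last K)| ≤ 1 * 1 := by
        apply mul_le_mul ha hb (abs_nonneg _) (by norm_num)
    _ ≤ 20 := by norm_num

lemma bK_eq (K : ℕ) (hK : 1 ≤ K) :
    bK K = SS K / Real.cosh (th K * (((0:ℕ):ℝ) + 1/2)) := by
  unfold bK
  rw [BK0L K hK]
  unfold Wr
  have hN := (N_pos K).ne'
  have hS := (SS_pos K).ne'
  have hco := (Real.cosh_pos (x := th K * (((0:ℕ):ℝ) + 1/2))).ne'
  field_simp

lemma bK_abs (K : ℕ) (hK : 1 ≤ K) : |bK K| ≤ 10 := by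
  rw [bK_eq K hK]
  have hS := SS_pos K
  have hS2 := SS_le_two K
  have hco1 : (1:ℝ) ≤ Real.cosh (th K * (((0:ℕ):ℝ) + 1/2)) := Real.one_le_cosh _
  have hco0 : (0:ℝ) < Real.cosh (th K * (((0:ℕ):ℝ) + 1/2)) := by linarith
  rw [abs_of_pos (by positivity)]
  rw [div_le_iff₀ hco0]
  nlinarith

lemma Mmat_transpose (K : ℕ) : (Mmat K)ᵀ = Mmat K :=
  Matrix.ext fun i j => by rw [Matrix.transpose_apply]; exact Mmat_symm K j i

lemma dot_symm (K : ℕ) (x y : Fin (K+1) → ℝ) :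
    x ⬝ᵥ (Mmat K).mulVec y = y ⬝ᵥ (Mmat K).mulVec x := by
  rw [Matrix.dotProduct_mulVec x]
  conv_lhs => rw [← Mmat_transpose K]
  rw [Matrix.vecMul_transpose, dotProduct_comm]

lemma Mmat_quad (K : ℕ) (hK : 1 ≤ K) (x : Fin (K+1) → ℝ) :
    x ⬝ᵥ (Mmat K).mulVec x
      = ((K + 1 : ℝ))⁻¹ ^ 2 * (x ⬝ᵥ x) + ∑ j : Fin K, (x j.castSucc - x j.succ)^2 := by
  rw [Mmat, Matrix.add_mulVec, Matrix.smul_mulVec, Matrix.one_mulVec,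
    dotProduct_add, dotProduct_smul, AK_quadform K hK x, smul_eq_mul]

lemma norm_sq_EV (K : ℕ) (w : EuclideanSpace ℝ (Fin (K+1))) :
    ‖w‖^2 = (fun j : Fin (K+1) => w j) ⬝ᵥ (fun j : Fin (K+1) => w j) := by
  rw [EuclideanSpace.norm_eq, Real.sq_sqrt (by positivity)]
  unfold dotProduct
  apply Finset.sum_congr rfl
  intro j _
  rw [Real.norm_eq_abs, sq_abs, sq]

lemma hsc_eq (K : ℕ) (hK : 1 ≤ K) (u v : ℝ) (w : EuclideanSpace ℝ (Fin (K+1))) :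
    hsc K u v w = (1/2) * ((fun j : Fin (K+1) => w j) ⬝ᵥ (Mmat K).mulVec (fun j : Fin (K+1) => w j))
      - (u * w 0 - v * w (Fin.last K)) := by
  unfold hsc
  rw [Mmat_quad K hK, norm_sq_EV K w]
  have hN := (N_pos K).ne'
  have hc : (1/(2*((K+1:ℝ))^2)) = ((K+1:ℝ))⁻¹^2 * (1/2) := by
    field_simp
  rw [hc]
  ring

lemma dot_single_pair (K : ℕ) (u v : ℝ) (δ : Fin (K+1) → ℝ) :
    δ ⬝ᵥ (fun j => u * (Pi.single (0 : Fin (K+1)) (1:ℝ) : Fin (K+1) → ℝ) j - v * (Pi.single (Fin.last K) (1:ℝ) : Fin (K+1) → ℝ) j)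
      = u * δ 0 - v * δ (Fin.last K) := by
  unfold dotProduct
  have : ∀ j : Fin (K+1), δ j * (u * (Pi.single (0 : Fin (K+1)) (1:ℝ) : Fin (K+1) → ℝ) j - v * (Pi.single (Fin.last K) (1:ℝ) : Fin (K+1) → ℝ) j)
      = u * (if j = 0 then δ j else 0) - v * (if j = Fin.last K then δ j else 0) := by
    intro j
    rw [Pi.single_apply, Pi.single_apply]
    split_ifs <;> ring
  rw [Finset.sum_congr rfl (fun j _ => this j), Finset.sum_sub_distrib, ← Finset.mul_sum, ← Finset.mul_sum,
    Finset.sum_ite_eq' Finset.univ (0 : Fin (K+1)) δ,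
    Finset.sum_ite_eq' Finset.univ (Fin.last K) δ]
  simp

lemma block_min (K : ℕ) (hK : 1 ≤ K) (u v : ℝ) (w : EuclideanSpace ℝ (Fin (K+1)))
    (hmin : ∀ w' : EuclideanSpace ℝ (Fin (K+1)), hsc K u v w ≤ hsc K u v w') :
    ∀ j : Fin (K+1), w j = u * Wl K j - v * Wr K j := by
  set ws : Fin (K+1) → ℝ := fun j => u * Wl K j - v * Wr K j with hws
  have hMws : (Mmat K).mulVec ws
      = fun j => u * (Pi.single (0 : Fin (K+1)) (1:ℝ) : Fin (K+1) → ℝ) j - v * (Pi.single (Fin.last K) (1:ℝ) : Fin (K+1) → ℝ) j := by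
    have h1 : ws = (u • fun j : Fin (K+1) => Wl K j) - (v • fun j : Fin (K+1) => Wr K j) := by
      funext j
      simp [hws, smul_eq_mul]
    rw [h1, Matrix.mulVec_sub, Matrix.mulVec_smul, Matrix.mulVec_smul, Ml K hK, Mr K hK]
    funext j
    simp [smul_eq_mul]
  set δ : Fin (K+1) → ℝ := fun j => w j - ws j with hδ
  have hQ : hsc K u v w - hsc K u v (WithLp.toLp 2 ws) = (1/2) * (δ ⬝ᵥ (Mmat K).mulVec δ) := by
    rw [hsc_eq K hK u v w, hsc_eq K hK u v (WithLp.toLp 2 ws)]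
    simp only [WithLp.ofLp_toLp]
    have hw_split : (fun j : Fin (K+1) => w j) = ws + δ := by
      funext j
      show w j = ws j + (w j - ws j)
      ring
    rw [hw_split]
    rw [Matrix.mulVec_add, dotProduct_add, add_dotProduct, add_dotProduct]
    rw [dot_symm K ws δ]
    have hlin : δ ⬝ᵥ (Mmat K).mulVec ws = u * δ 0 - v * δ (Fin.last K) := by
      rw [hMws]
      exact dot_single_pair K u v δ
    have hws0 : ws 0 + δ 0 = w 0 := by simp [hδ]
    have hwsL : ws (Fin.last K) + δ (Fin.last K) = w (Fin.last K) := by simp [hδ]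
    rw [hlin, ← hws0, ← hwsL]
    ring
  have hle : hsc K u v w ≤ hsc K u v (WithLp.toLp 2 ws) := hmin (WithLp.toLp 2 ws)
  have hδ0 : δ = 0 := by
    by_contra hne
    have hpos := (Mmat_posdef K hK).dotProduct_mulVec_pos hne
    have hstar : star δ = δ := by funext j; simp
    rw [hstar] at hpos
    have : (0:ℝ) < hsc K u v w - hsc K u v (WithLp.toLp 2 ws) := by rw [hQ]; linarith
    linarith
  intro j
  have := congrFun hδ0 j
  simp only [hδ, Pi.zero_apply] at this
  have : w j - ws j = 0 := this
  have := sub_eq_zero.mp this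
  rw [this]

lemma Wl_last (K : ℕ) : Wl K K = Wr K 0 := by
  unfold Wl Wr
  rw [show th K * ((K + 1 : ℝ) - 1/2 - ((K:ℕ):ℝ)) = th K * (((0:ℕ):ℝ) + 1/2) by push_cast; ring]

lemma Wr_last (K : ℕ) : Wr K K = Wl K 0 := by
  unfold Wl Wr
  rw [show th K * (((K:ℕ):ℝ) + 1/2) = th K * ((K + 1 : ℝ) - 1/2 - ((0:ℕ):ℝ)) by push_cast; ring]

lemma aK_val (K : ℕ) (hK : 1 ≤ K) :
    aK K = (1 / ((K:ℝ) + 1)) * (1 - Wl K 0 / Wr K 0) := by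
  unfold aK
  rw [BK00 K hK, BK0L K hK]

lemma bK_val (K : ℕ) (hK : 1 ≤ K) : bK K = ((K:ℝ) + 1) / Wr K 0 := by
  unfold bK
  rw [BK0L K hK]

lemma term_calc (c P Q u v : ℝ) (hc : 0 < c) (hQ : 0 < Q) :
    (1/c) * (1 - P/Q) / 2 * ((c^2*u)^2 + (c^2*v)^2)
      + (c/Q) / 2 * ((c^2*u) * (u*P - v*Q) - (c^2*v) * (u*Q - v*P))
    = c^3/2 * (u - v)^2 := by
  field_simp
  ring

end Hyper

/-- **Lemma 6 (hyperfunc)**: for `K ≥ 10` (here `K = K'+10`) the coefficients satisfy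
`|a_K| ≤ 20` and `|b_K| ≤ 10`, and for the unique lower-level minimizer
`(z*(x), y*(x))` of `(z,y) ↦ ḡ^{sc}(x,z,y)` one has
`H(x) = h(z*(x), y*(x)) = (K³/2) Σ_{i=1}^{T−1} (x_i − x_{i+1})²`. -/

theorem hyperfunc_identity (K' T' : ℕ)
    (zst : EV (T' + 2) → EV (T' + 2)) (yst : EV (T' + 2) → EY (K' + 9) T')
    (hmin : ∀ (x z : EV (T' + 2)) (y : EY (K' + 9) T'),
      gbar (K' + 9) T' x (zst x) (yst x) ≤ gbar (K' + 9) T' x z y) :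
    |aK (K' + 9)| ≤ 20 ∧ |bK (K' + 9)| ≤ 10 ∧
    ∀ x : EV (T' + 2),
      hfun (K' + 9) T' (zst x) (yst x)
        = ((K' + 10 : ℝ)) ^ 3 / 2 * ∑ i : Fin (T' + 1), (x i.castSucc - x i.succ) ^ 2 := by
  have hK : 1 ≤ K' + 9 := by omega
  refine ⟨Hyper.aK_abs _ hK, Hyper.bK_abs _ hK, ?_⟩
  intro x
  -- Step 1: characterize zst x
  have hzmin : ∀ z : EV (T' + 2),
      (1 / (2 * (((K' + 9 : ℕ) : ℝ) + 1) ^ 2)) * ‖zst x‖ ^ 2 - ⟪x, zst x⟫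
        ≤ (1 / (2 * (((K' + 9 : ℕ) : ℝ) + 1) ^ 2)) * ‖z‖ ^ 2 - ⟪x, z⟫ := by
    intro z
    have h := hmin x z (yst x)
    unfold gbar at h
    linarith
  set c : ℝ := ((K' + 9 : ℕ) : ℝ) + 1 with hcdef
  have hcpos : 0 < c := by positivity
  have hz : ∀ j : Fin (T' + 2), zst x j = c ^ 2 * x j := by
    have expand : ‖zst x - c ^ 2 • x‖ ^ 2
        = ‖zst x‖ ^ 2 - 2 * (c ^ 2 * ⟪x, zst x⟫) + c ^ 4 * ‖x‖ ^ 2 := by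
      rw [norm_sub_sq_real, real_inner_smul_right, real_inner_comm, norm_smul, mul_pow]
      have : ‖(c ^ 2 : ℝ)‖ ^ 2 = c ^ 4 := by
        rw [Real.norm_eq_abs, sq_abs]; ring
      rw [this]
    have h1 := hzmin (c ^ 2 • x)
    have h2 : ‖c ^ 2 • x‖ ^ 2 = c ^ 4 * ‖x‖ ^ 2 := by
      rw [norm_smul, mul_pow, Real.norm_eq_abs, sq_abs]; ring
    have h3 : ⟪x, c ^ 2 • x⟫ = c ^ 2 * ‖x‖ ^ 2 := by
      rw [real_inner_smul_right, real_inner_self_eq_norm_sq]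
    rw [h2, h3] at h1
    have hc2 : (0:ℝ) < c ^ 2 := by positivity
    have key : ‖zst x - c ^ 2 • x‖ ^ 2 ≤ 0 := by
      rw [expand]
      have e7 : ‖zst x‖ ^ 2 - 2 * (c ^ 2 * ⟪x, zst x⟫) + c ^ 4 * ‖x‖ ^ 2
          = 2 * c ^ 2 * (((1 / (2 * c ^ 2)) * ‖zst x‖ ^ 2 - ⟪x, zst x⟫)
            - ((1 / (2 * c ^ 2)) * (c ^ 4 * ‖x‖ ^ 2) - c ^ 2 * ‖x‖ ^ 2)) := by
        field_simp
        ring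
      rw [e7]
      apply mul_nonpos_of_nonneg_of_nonpos (by positivity)
      linarith [h1]
    have hzero : zst x - c ^ 2 • x = 0 := by
      have hn : ‖zst x - c ^ 2 • x‖ = 0 := by
        nlinarith [norm_nonneg (zst x - c ^ 2 • x), sq_nonneg ‖zst x - c ^ 2 • x‖]
      exact norm_eq_zero.mp hn
    intro j
    have := congrFun (congrArg (fun (v : EV (T' + 2)) (j : Fin (T' + 2)) => v j) hzero) j
    simp only [PiLp.sub_apply, PiLp.smul_apply, smul_eq_mul, PiLp.zero_apply] at this
    linarith [this]
  -- Step 2: characterize the blocks of yst x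
  have hy : ∀ (i : Fin (T' + 1)) (j : Fin (K' + 9 + 1)),
      yst x (i, j) = x i.castSucc * Hyper.Wl (K' + 9) j - x i.succ * Hyper.Wr (K' + 9) j := by
    intro i₀
    have hblockmin : ∀ w' : EV (K' + 9 + 1),
        hsc (K' + 9) (x i₀.castSucc) (x i₀.succ) (WithLp.toLp 2 (fun j => yst x (i₀, j)))
          ≤ hsc (K' + 9) (x i₀.castSucc) (x i₀.succ) w' := by
      intro w'
      set y' : EY (K' + 9) T' := WithLp.toLp 2 (fun p => if p.1 = i₀ then w' p.2 else yst x p) with hy'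
      have h := hmin x (zst x) y'
      unfold gbar at h
      have hsum : ∑ i : Fin (T' + 1), hsc (K' + 9) (x i.castSucc) (x i.succ) (WithLp.toLp 2 (fun j => yst x (i, j)))
          ≤ ∑ i : Fin (T' + 1), hsc (K' + 9) (x i.castSucc) (x i.succ) (WithLp.toLp 2 (fun j => y' (i, j))) := by
        linarith
      have hoff : ∀ i ∈ Finset.univ.erase i₀,
          hsc (K' + 9) (x i.castSucc) (x i.succ) (WithLp.toLp 2 (fun j => y' (i, j)))
            = hsc (K' + 9) (x i.castSucc) (x i.succ) (WithLp.toLp 2 (fun j => yst x (i, j))) := by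
        intro i hi
        have hne : i ≠ i₀ := (Finset.mem_erase.mp hi).1
        congr 2
        funext j
        show (if i = i₀ then w' j else yst x (i, j)) = yst x (i, j)
        rw [if_neg hne]
      have hblock : (fun j => y' (i₀, j)) = fun j : Fin (K' + 9 + 1) => w' j := by
        funext j
        show (if i₀ = i₀ then w' j else yst x (i₀, j)) = w' j
        rw [if_pos rfl]
      have hA := Finset.add_sum_erase Finset.univ
        (fun i : Fin (T' + 1) => hsc (K' + 9) (x i.castSucc) (x i.succ) (WithLp.toLp 2 (fun j => yst x (i, j))))
        (Finset.mem_univ i₀)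
      have hB := Finset.add_sum_erase Finset.univ
        (fun i : Fin (T' + 1) => hsc (K' + 9) (x i.castSucc) (x i.succ) (WithLp.toLp 2 (fun j => y' (i, j))))
        (Finset.mem_univ i₀)
      have hoffsum : ∑ i ∈ Finset.univ.erase i₀,
            hsc (K' + 9) (x i.castSucc) (x i.succ) (WithLp.toLp 2 (fun j => y' (i, j)))
          = ∑ i ∈ Finset.univ.erase i₀,
            hsc (K' + 9) (x i.castSucc) (x i.succ) (WithLp.toLp 2 (fun j => yst x (i, j))) :=
        Finset.sum_congr rfl hoff
      have hfinal : hsc (K' + 9) (x i₀.castSucc) (x i₀.succ) (WithLp.toLp 2 (fun j => yst x (i₀, j)))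
          ≤ hsc (K' + 9) (x i₀.castSucc) (x i₀.succ) (WithLp.toLp 2 (fun j => y' (i₀, j))) := by
        linarith
      rwa [hblock] at hfinal
    intro j
    have := Hyper.block_min (K' + 9) hK (x i₀.castSucc) (x i₀.succ)
      (WithLp.toLp 2 (fun j => yst x (i₀, j))) hblockmin j
    simpa using this
  -- Step 3: compute hfun
  unfold hfun
  have hterm : ∀ i : Fin (T' + 1),
      aK (K' + 9) / 2 * ((zst x i.castSucc) ^ 2 + (zst x i.succ) ^ 2)
        + bK (K' + 9) / 2 * (zst x i.castSucc * yst x (i, 0)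
            - zst x i.succ * yst x (i, Fin.last (K' + 9)))
      = c ^ 3 / 2 * (x i.castSucc - x i.succ) ^ 2 := by
    intro i
    rw [hz i.castSucc, hz i.succ, hy i 0, hy i (Fin.last (K' + 9))]
    simp only [Fin.val_zero, Fin.val_last]
    rw [Hyper.Wl_last, Hyper.Wr_last]
    rw [Hyper.aK_val _ hK, Hyper.bK_val _ hK]
    have hQ := Hyper.Wr0_pos (K' + 9)
    have hcalc := Hyper.term_calc c (Hyper.Wl (K' + 9) 0) (Hyper.Wr (K' + 9) 0)
      (x i.castSucc) (x i.succ) hcpos hQ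
    rw [← hcdef]
    linarith [hcalc]
  rw [Finset.sum_congr rfl (fun i _ => hterm i), ← Finset.mul_sum]
  have : c = (K' + 10 : ℝ) := by rw [hcdef]; push_cast; ring
  rw [this]
end
end

section
/- Hyper-objective identity for the NC-SC hard instance: let K ≥ 10 and T ≥ 2 be integers, ν ∈ (0,1] and r ≥ 1, and let (z*(x), y*(x)) be the unique minimizer of (z,y) ↦ ḡ^{sc}(x,z,y). Then for every x ∈ ℝ^T, f̄^{nc-sc}(x, z*(x), y*(x)) = f̄^{nc}_{ν,r}(K^{3/2} x), where f̄^{nc}_{ν,r}(u) := (√ν/2)(u_1 − 1)² + ½ Σ_{i=2}^T (u_i − u_{i−1})² + ν Σ_{i=1}^{T−1} Υ_r(u_i) for u ∈ ℝ^T. -/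
noncomputable section
open scoped RealInnerProductSpace

/-- The nonconvex zero-chain
`f̄^{nc}_{ν,r}(u) = (√ν/2)(u₁−1)² + ½ Σ_{i=2}^T (u_i − u_{i−1})² + ν Σ_{i=1}^{T−1} Υ_r(u_i)`
on `ℝ^{T'+2}`. -/
def fnc (T' : ℕ) (ν r : ℝ) : EV (T' + 2) → ℝ := fun u =>
  (Real.sqrt ν / 2) * (u 0 - 1) ^ 2
    + (1 / 2) * ∑ i : Fin (T' + 1), (u i.succ - u i.castSucc) ^ 2
    + ν * ∑ i : Fin (T' + 1), Upsilon r (u i.castSucc)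

open Matrix Finset in
/-- ℕ-level entry function of `AK K`. -/
def AKN (K a b : ℕ) : ℝ :=
  if a = b then (if a = 0 ∨ a = K then 1 else 2)
  else if a + 1 = b ∨ b + 1 = a then -1 else 0

open Finset in
lemma core (K : ℕ) (V W : ℕ → ℝ) :
    ∑ t ∈ range (K + 1), (V t - V (t + 1)) * (W t - W (t + 1))
      = ∑ a ∈ range (K + 2), ∑ b ∈ range (K + 2), V a * AKN (K + 1) a b * W b := by
  induction K generalizing V W with
  | zero =>
    simp [Finset.sum_range_succ, AKN]
    ring
  | succ K ih =>
    rw [Finset.sum_range_succ, ih V W]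
    have hrow : ∀ b < K + 3, AKN (K + 2) (K + 2) b = (if b = K + 2 then 1 else if b = K + 1 then -1 else 0) := by
      intro b hb
      unfold AKN
      split_ifs <;> first | rfl | (exfalso; omega)
    have hcol : ∀ a < K + 2, AKN (K + 2) a (K + 2) = (if a = K + 1 then -1 else 0) := by
      intro a ha
      unfold AKN
      split_ifs <;> first | rfl | (exfalso; omega)
    have hblk : ∀ a < K + 2, ∀ b < K + 2,
        AKN (K + 2) a b = AKN (K + 1) a b + (if a = K + 1 ∧ b = K + 1 then 1 else 0) := by
      intro a ha b hb
      unfold AKN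
      split_ifs <;> first | (exfalso; omega) | norm_num
    -- expand RHS
    rw [Finset.sum_range_succ (n := K + 2)]
    have e1 : ∑ b ∈ range (K + 3), V (K + 2) * AKN (K + 2) (K + 2) b * W b
        = V (K + 2) * W (K + 2) - V (K + 2) * W (K + 1) := by
      rw [Finset.sum_congr rfl (fun b hb => by
        rw [hrow b (Finset.mem_range.mp hb)])]
      have : ∀ b ∈ range (K + 3),
          V (K + 2) * (if b = K + 2 then (1:ℝ) else if b = K + 1 then -1 else 0) * W b
          = (if b = K + 2 then V (K + 2) * W b else 0)
            + (if b = K + 1 then -(V (K + 2) * W b) else 0) := by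
        intro b _
        split_ifs <;> first | omega | ring
      rw [Finset.sum_congr rfl this, Finset.sum_add_distrib,
        Finset.sum_ite_eq' (range (K + 3)) (K + 2), Finset.sum_ite_eq' (range (K + 3)) (K + 1)]
      simp
      ring
    rw [e1]
    have e2 : ∀ a ∈ range (K + 2), ∑ b ∈ range (K + 3), V a * AKN (K + 2) a b * W b
        = (∑ b ∈ range (K + 2), V a * AKN (K + 1) a b * W b)
          + (if a = K + 1 then V a * W (K + 1) - V a * W (K + 2) else 0) := by
      intro a ha
      have ha' := Finset.mem_range.mp ha
      rw [Finset.sum_range_succ, hcol a ha']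
      rw [Finset.sum_congr rfl (fun b hb => by
        rw [hblk a ha' b (Finset.mem_range.mp hb)])]
      have : ∀ b ∈ range (K + 2),
          V a * (AKN (K + 1) a b + if a = K + 1 ∧ b = K + 1 then (1:ℝ) else 0) * W b
          = V a * AKN (K + 1) a b * W b + (if b = K + 1 then (if a = K + 1 then V a * W b else 0) else 0) := by
        intro b _
        split_ifs <;> first | omega | ring
      rw [Finset.sum_congr rfl this, Finset.sum_add_distrib,
        Finset.sum_ite_eq' (range (K + 2)) (K + 1)]
      rw [if_pos (by simp : K + 1 ∈ range (K + 2))]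
      split_ifs <;> ring
    rw [Finset.sum_congr rfl e2, Finset.sum_add_distrib,
      Finset.sum_ite_eq' (range (K + 2)) (K + 1)]
    simp only [Finset.mem_range, Nat.lt_succ_self, if_true, Nat.lt_add_one]
    ring

open Matrix Finset

lemma AK_apply (K : ℕ) (i j : Fin (K + 1)) : AK K i j = AKN K i.1 j.1 := by
  unfold AK AKN
  simp only [Fin.ext_iff]

/-- The bilinear form of the path Laplacian. -/
lemma bil (K : ℕ) (v w : Fin (K + 2) → ℝ) :
    v ⬝ᵥ (AK (K + 1)) *ᵥ w
      = ∑ j : Fin (K + 1), (v j.castSucc - v j.succ) * (w j.castSucc - w j.succ) := by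
  classical
  set V : ℕ → ℝ := fun m => if h : m < K + 2 then v ⟨m, h⟩ else 0 with hV
  set W : ℕ → ℝ := fun m => if h : m < K + 2 then w ⟨m, h⟩ else 0 with hW
  have hv : ∀ i : Fin (K + 2), v i = V i.1 := by
    intro i; rw [hV]; simp [i.2]
  have hw : ∀ i : Fin (K + 2), w i = W i.1 := by
    intro i; rw [hW]; simp [i.2]
  have h1 : v ⬝ᵥ (AK (K + 1)) *ᵥ w
      = ∑ a ∈ range (K + 2), ∑ b ∈ range (K + 2), V a * AKN (K + 1) a b * W b := by
    rw [dotProduct,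
      ← Fin.sum_univ_eq_sum_range (fun a => ∑ b ∈ range (K + 2), V a * AKN (K + 1) a b * W b) (K + 2)]
    apply Finset.sum_congr rfl
    intro i _
    rw [Matrix.mulVec, dotProduct, Finset.mul_sum,
      ← Fin.sum_univ_eq_sum_range (fun b => V i.1 * AKN (K + 1) i.1 b * W b) (K + 2)]
    apply Finset.sum_congr rfl
    intro j _
    rw [AK_apply, hv i, hw j]
    ring
  rw [h1, ← core K V W,
    ← Fin.sum_univ_eq_sum_range (fun t => (V t - V (t + 1)) * (W t - W (t + 1))) (K + 1)]
  apply Finset.sum_congr rfl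
  intro j _
  rw [hv j.castSucc, hv j.succ, hw j.castSucc, hw j.succ]
  simp [Fin.coe_castSucc, Fin.val_succ]

def Mmat (K : ℕ) : Matrix (Fin (K + 1)) (Fin (K + 1)) ℝ :=
  ((K + 1 : ℝ))⁻¹ ^ 2 • (1 : Matrix (Fin (K + 1)) (Fin (K + 1)) ℝ) + AK K

lemma BK_eq (K : ℕ) : BK K = (Mmat K)⁻¹ := rfl

lemma Mmat_mulVec (K : ℕ) (w : Fin (K + 1) → ℝ) :
    (Mmat K) *ᵥ w = ((K + 1 : ℝ))⁻¹ ^ 2 • w + (AK K) *ᵥ w := by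
  rw [Mmat, Matrix.add_mulVec, Matrix.smul_mulVec, Matrix.one_mulVec]

lemma Mmat_det (K : ℕ) : IsUnit (Mmat (K + 1)).det := by
  rw [isUnit_iff_ne_zero]
  intro h
  obtain ⟨v, hv0, hv⟩ := Matrix.exists_mulVec_eq_zero_iff.mpr h
  have h2 : v ⬝ᵥ (Mmat (K + 1)) *ᵥ v = 0 := by rw [hv]; simp [dotProduct]
  rw [Mmat_mulVec, dotProduct_add, dotProduct_smul, bil, smul_eq_mul] at h2
  have hvv : v ⬝ᵥ v = ∑ i, v i ^ 2 := by
    rw [dotProduct]; exact Finset.sum_congr rfl fun i _ => (sq (v i)).symm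
  rw [hvv] at h2
  have hc : (0 : ℝ) < ((K + 1 + 1 : ℝ))⁻¹ ^ 2 := by positivity
  have hs1 : (0 : ℝ) ≤ ∑ i, v i ^ 2 := Finset.sum_nonneg fun i _ => sq_nonneg _
  have hs2 : (0 : ℝ) ≤ ∑ j : Fin (K + 1),
      (v j.castSucc - v j.succ) * (v j.castSucc - v j.succ) :=
    Finset.sum_nonneg fun j _ => mul_self_nonneg _
  have hz : ∑ i, v i ^ 2 = 0 := by push_cast at h2 hc ⊢; nlinarith
  apply hv0
  funext i
  have := (Finset.sum_eq_zero_iff_of_nonneg (fun i _ => sq_nonneg (v i))).mp hz i (Finset.mem_univ i)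
  exact pow_eq_zero_iff (two_ne_zero) |>.mp this

lemma mul_BK (K : ℕ) : Mmat (K + 1) * BK (K + 1) = 1 := by
  rw [BK_eq]; exact Matrix.mul_nonsing_inv _ (Mmat_det K)

lemma BK_mul (K : ℕ) : BK (K + 1) * Mmat (K + 1) = 1 := by
  rw [BK_eq]; exact Matrix.nonsing_inv_mul _ (Mmat_det K)

lemma AK_symm (K : ℕ) : (AK K)ᵀ = AK K := by
  ext i j
  have hi := i.2; have hj := j.2
  simp only [Matrix.transpose_apply, AK, Fin.ext_iff]
  split_ifs <;> first | rfl | (exfalso; omega)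

lemma Mmat_symm (K : ℕ) : (Mmat K)ᵀ = Mmat K := by
  unfold Mmat
  rw [Matrix.transpose_add, Matrix.transpose_smul, Matrix.transpose_one, AK_symm]

lemma BK_symm_apply (K : ℕ) (i j : Fin (K + 1)) : BK K i j = BK K j i := by
  have h : (BK K)ᵀ = BK K := by
    rw [BK_eq, Matrix.transpose_nonsing_inv, Mmat_symm]
  have := congrFun (congrFun h j) i
  simpa [Matrix.transpose_apply] using this

lemma AK_rev (K : ℕ) (i j : Fin (K + 1)) : AK K i.rev j.rev = AK K i j := by
  have hi := i.2; have hj := j.2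
  simp only [AK, Fin.ext_iff, Fin.val_rev]
  split_ifs <;> first | rfl | (exfalso; omega)

lemma Mmat_rev (K : ℕ) (i j : Fin (K + 1)) : Mmat K i.rev j.rev = Mmat K i j := by
  simp only [Mmat, Matrix.add_apply, Matrix.smul_apply, Matrix.one_apply, Fin.rev_inj, AK_rev,
    smul_eq_mul]

lemma BK_rev (K : ℕ) (i j : Fin (K + 2)) : BK (K + 1) i.rev j.rev = BK (K + 1) i j := by
  have hM : (Mmat (K + 1)).submatrix Fin.rev Fin.rev = Mmat (K + 1) := by
    ext i j; exact Mmat_rev (K + 1) i j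
  have h1 : ((BK (K + 1)).submatrix (Fin.revPerm : Equiv.Perm (Fin (K + 2)))
        (Fin.revPerm : Equiv.Perm (Fin (K + 2)))) * Mmat (K + 1) = 1 := by
    calc ((BK (K + 1)).submatrix (Fin.revPerm : Equiv.Perm (Fin (K + 2))) Fin.revPerm)
          * Mmat (K + 1)
        = ((BK (K + 1)).submatrix (Fin.revPerm : Equiv.Perm (Fin (K + 2))) Fin.revPerm)
          * ((Mmat (K + 1)).submatrix (Fin.revPerm : Equiv.Perm (Fin (K + 2))) Fin.revPerm) := by
          rw [show ((Mmat (K + 1)).submatrix (Fin.revPerm : Equiv.Perm (Fin (K + 2))) Fin.revPerm)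
            = Mmat (K + 1) from hM]
      _ = (BK (K + 1) * Mmat (K + 1)).submatrix (Fin.revPerm : Equiv.Perm (Fin (K + 2))) Fin.revPerm := by
          rw [Matrix.submatrix_mul_equiv]
      _ = 1 := by rw [BK_mul]; exact Matrix.submatrix_one_equiv _
  have h2 : (Mmat (K + 1))⁻¹
      = (BK (K + 1)).submatrix (Fin.revPerm : Equiv.Perm (Fin (K + 2))) Fin.revPerm :=
    Matrix.inv_eq_left_inv h1
  have := congrFun (congrFun (h2.symm.trans (BK_eq (K + 1)).symm) i) j
  simpa [Matrix.submatrix_apply] using this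

/-- prefix indicator vectors -/
def pv (K m : ℕ) : Fin (K + 2) → ℝ := fun t => if t.1 ≤ m then 1 else 0

lemma pv_dot (K m : ℕ) (w : Fin (K + 2) → ℝ)
    (hMw : (Mmat (K + 1)) *ᵥ w = fun t => if t = Fin.last (K + 1) then 1 else 0) :
    pv K m ⬝ᵥ (AK (K + 1)) *ᵥ w
      = (if K + 1 ≤ m then 1 else 0)
        - ((K + 1 + 1 : ℝ))⁻¹ ^ 2 * (∑ t : Fin (K + 2), pv K m t * w t) := by
  have hA : (AK (K + 1)) *ᵥ w
      = (fun t => if t = Fin.last (K + 1) then (1 : ℝ) else 0)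
        - ((K + 1 + 1 : ℝ))⁻¹ ^ 2 • w := by
    have h := Mmat_mulVec (K + 1) w
    rw [hMw] at h
    funext t
    have ht := congrFun h t
    simp only [Pi.add_apply, Pi.smul_apply, smul_eq_mul, Pi.sub_apply] at ht ⊢
    push_cast at ht ⊢
    linarith
  have hδ : pv K m ⬝ᵥ (fun t => if t = Fin.last (K + 1) then (1:ℝ) else 0)
      = (if K + 1 ≤ m then 1 else 0) := by
    rw [dotProduct]
    have h1 : ∀ t : Fin (K + 2), pv K m t * (if t = Fin.last (K + 1) then (1:ℝ) else 0)
        = if t = Fin.last (K + 1) then pv K m t else 0 := by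
      intro t; split_ifs <;> ring
    rw [Finset.sum_congr rfl fun t _ => h1 t,
      Finset.sum_ite_eq' Finset.univ (Fin.last (K + 1))]
    simp [pv, Fin.last]
  rw [hA, dotProduct_sub, dotProduct_smul, smul_eq_mul, hδ]
  rw [dotProduct]

lemma pv_diff_sum (K m : ℕ) (hm : m < K + 1) (w : Fin (K + 2) → ℝ) :
    ∑ j : Fin (K + 1), (pv K m j.castSucc - pv K m j.succ) * (w j.castSucc - w j.succ)
      = w ⟨m, by omega⟩ - w ⟨m + 1, by omega⟩ := by
  have h : ∀ j : Fin (K + 1),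
      (pv K m j.castSucc - pv K m j.succ) * (w j.castSucc - w j.succ)
        = if j = (⟨m, hm⟩ : Fin (K + 1)) then (w j.castSucc - w j.succ) else 0 := by
    intro j
    have hj := j.2
    simp only [pv, Fin.coe_castSucc, Fin.val_succ, Fin.ext_iff]
    split_ifs
    all_goals (try (exfalso; omega))
    all_goals ring
  rw [Finset.sum_congr rfl fun j _ => h j, Finset.sum_ite_eq' Finset.univ (⟨m, hm⟩ : Fin (K + 1))]
  simp only [Finset.mem_univ, if_true]
  congr 1 <;> exact congrArg w (by simp [Fin.ext_iff])

lemma pv_diff_sum_top (K : ℕ) (w : Fin (K + 2) → ℝ) :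
    ∑ j : Fin (K + 1), (pv K (K + 1) j.castSucc - pv K (K + 1) j.succ) * (w j.castSucc - w j.succ)
      = 0 := by
  apply Finset.sum_eq_zero
  intro j _
  have hj := j.2
  simp only [pv, Fin.coe_castSucc, Fin.val_succ]
  rw [if_pos (by omega), if_pos (by omega)]
  ring

lemma B0last_ne (K : ℕ) : BK (K + 1) 0 (Fin.last (K + 1)) ≠ 0 := by
  classical
  intro h0
  set c : ℝ := ((K + 1 + 1 : ℝ))⁻¹ ^ 2 with hc
  set w : Fin (K + 2) → ℝ := fun t => BK (K + 1) t (Fin.last (K + 1)) with hw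
  have hMw : (Mmat (K + 1)) *ᵥ w = fun t => if t = Fin.last (K + 1) then 1 else 0 := by
    funext t
    have h := congrFun (congrFun (mul_BK K) t) (Fin.last (K + 1))
    simpa [Matrix.mul_apply, Matrix.mulVec, dotProduct, Matrix.one_apply, hw] using h
  set S : ℕ → ℝ := fun m => ∑ t : Fin (K + 2), pv K m t * w t with hS
  have eq1 : ∀ m, ∀ hm : m < K + 1, w ⟨m, by omega⟩ - w ⟨m + 1, by omega⟩ = 0 - c * S m := by
    intro m hm
    rw [← pv_diff_sum K m hm w, ← bil, pv_dot K m w hMw, if_neg (by omega)]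
  have eq2 : c * S (K + 1) = 1 := by
    have h2 := (bil K (pv K (K + 1)) w).symm.trans (pv_dot K (K + 1) w hMw)
    rw [pv_diff_sum_top K w, if_pos (le_refl _)] at h2
    simp only [hc, hS]
    linarith
  have zero : ∀ m, m ≤ K + 1 → (∀ hm : m < K + 2, w ⟨m, hm⟩ = 0) ∧ S m = 0 := by
    intro m
    induction m with
    | zero =>
      intro _
      have hw0 : w ⟨0, by omega⟩ = 0 := by simpa [hw] using h0
      refine ⟨fun hm => hw0, ?_⟩
      simp only [hS]
      have h1 : ∀ t : Fin (K + 2), pv K 0 t * w t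
          = if t = (⟨0, by omega⟩ : Fin (K + 2)) then w t else 0 := by
        intro t
        simp only [pv, Fin.ext_iff]
        split_ifs
        all_goals (try (exfalso; omega))
        all_goals ring
      rw [Finset.sum_congr rfl fun t _ => h1 t,
        Finset.sum_ite_eq' Finset.univ (⟨0, by omega⟩ : Fin (K + 2))]
      simpa using hw0
    | succ m ih =>
      intro hm1
      obtain ⟨ihw, ihS⟩ := ih (by omega)
      have hwm1 : w ⟨m + 1, by omega⟩ = 0 := by
        have h3 := eq1 m (by omega)
        rw [ihS, ihw (by omega)] at h3
        linarith [h3]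
      refine ⟨fun _ => hwm1, ?_⟩
      simp only [hS]
      have h1 : ∀ t : Fin (K + 2), pv K (m + 1) t * w t
          = pv K m t * w t + (if t = (⟨m + 1, by omega⟩ : Fin (K + 2)) then w t else 0) := by
        intro t
        simp only [pv, Fin.ext_iff]
        split_ifs
        all_goals (try (exfalso; omega))
        all_goals ring
      rw [Finset.sum_congr rfl fun t _ => h1 t, Finset.sum_add_distrib,
        Finset.sum_ite_eq' Finset.univ (⟨m + 1, by omega⟩ : Fin (K + 2))]
      simp only [Finset.mem_univ, if_true]
      rw [hwm1]
      have : (∑ t : Fin (K + 2), pv K m t * w t) = S m := by rw [hS]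
      rw [this, ihS]
      ring
  have hfin : S (K + 1) = 0 := (zero (K + 1) (le_refl _)).2
  rw [hfin, mul_zero] at eq2
  exact zero_ne_one eq2

/-! ### sum forms and the quadratic expansion -/

def HSC (K : ℕ) (u v : ℝ) (w : Fin (K + 1) → ℝ) : ℝ :=
  (1 / 2) * ∑ j : Fin K, (w j.castSucc - w j.succ) ^ 2
    + (1 / (2 * ((K + 1 : ℝ)) ^ 2)) * ∑ t, (w t) ^ 2 - (u * w 0 - v * w (Fin.last K))

lemma norm_sq_EV (n : ℕ) (w : EV n) : ‖w‖ ^ 2 = ∑ t, (w t) ^ 2 := by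
  rw [EuclideanSpace.norm_eq, Real.sq_sqrt (by positivity)]
  simp [Real.norm_eq_abs, sq_abs]

lemma inner_EV (n : ℕ) (x z : EV n) : ⟪x, z⟫ = ∑ i, x i * z i := by
  simp [PiLp.inner_apply, RCLike.inner_apply, conj_trivial]
  exact Finset.sum_congr rfl fun _ _ => mul_comm _ _

lemma hsc_eq (K : ℕ) (u v : ℝ) (w : EV (K + 1)) : hsc K u v w = HSC K u v (fun t => w t) := by
  unfold hsc HSC
  rw [norm_sq_EV]

lemma gbar_eq (K T' : ℕ) (x z : EV (T' + 2)) (y : EY K T') :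
    gbar K T' x z y
      = (1 / (2 * ((K + 1 : ℝ)) ^ 2)) * ∑ j, (z j) ^ 2 - ∑ j, x j * z j
        + ∑ i : Fin (T' + 1), HSC K (x i.castSucc) (x i.succ) (fun t => y (i, t)) := by
  unfold gbar
  rw [norm_sq_EV, inner_EV]
  congr 1
  apply Finset.sum_congr rfl
  intro i _
  exact hsc_eq K _ _ _

def rhsv (K : ℕ) (u v : ℝ) : Fin (K + 1) → ℝ :=
  fun t => (if t = 0 then u else 0) - (if t = Fin.last K then v else 0)

def wstar (K : ℕ) (u v : ℝ) : Fin (K + 1) → ℝ := (BK K) *ᵥ (rhsv K u v)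

lemma Mmat_wstar (K : ℕ) (u v : ℝ) :
    (Mmat (K + 1)) *ᵥ (wstar (K + 1) u v) = rhsv (K + 1) u v := by
  unfold wstar
  rw [Matrix.mulVec_mulVec, mul_BK, Matrix.one_mulVec]

lemma dot_rhsv (K : ℕ) (u v : ℝ) (δ : Fin (K + 2) → ℝ) :
    δ ⬝ᵥ rhsv (K + 1) u v = u * δ 0 - v * δ (Fin.last (K + 1)) := by
  unfold rhsv
  rw [dotProduct]
  have h1 : ∀ t : Fin (K + 2),
      δ t * ((if t = 0 then u else 0) - (if t = Fin.last (K + 1) then v else 0))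
        = (if t = (0 : Fin (K + 2)) then δ t * u else 0)
          - (if t = Fin.last (K + 1) then δ t * v else 0) := by
    intro t; split_ifs <;> ring
  rw [Finset.sum_congr rfl fun t _ => h1 t, Finset.sum_sub_distrib,
    Finset.sum_ite_eq' Finset.univ (0 : Fin (K + 2)), Finset.sum_ite_eq' Finset.univ (Fin.last (K + 1))]
  simp only [Finset.mem_univ, if_true]
  ring

lemma HSC_expand (K : ℕ) (u v : ℝ) (y : Fin (K + 2) → ℝ) :
    HSC (K + 1) u v y
      = HSC (K + 1) u v (wstar (K + 1) u v)
        + (1 / 2) * ∑ j : Fin (K + 1),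
            ((y j.castSucc - wstar (K + 1) u v j.castSucc)
              - (y j.succ - wstar (K + 1) u v j.succ)) ^ 2
        + (1 / (2 * (((K + 1 : ℕ) : ℝ) + 1) ^ 2)) * ∑ t, (y t - wstar (K + 1) u v t) ^ 2 := by
  set W : Fin (K + 2) → ℝ := wstar (K + 1) u v with hW
  set δ : Fin (K + 2) → ℝ := fun t => y t - W t with hδ
  have cross : (∑ j : Fin (K + 1), (δ j.castSucc - δ j.succ) * (W j.castSucc - W j.succ))
      + ((K + 1 + 1 : ℝ))⁻¹ ^ 2 * (∑ t, δ t * W t)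
      - (u * δ 0 - v * δ (Fin.last (K + 1))) = 0 := by
    have h1 : ∑ j : Fin (K + 1), (δ j.castSucc - δ j.succ) * (W j.castSucc - W j.succ)
        = δ ⬝ᵥ (AK (K + 1)) *ᵥ W := (bil K δ W).symm
    have h2 : (∑ t, δ t * W t) = δ ⬝ᵥ W := rfl
    have h3 : δ ⬝ᵥ (Mmat (K + 1) *ᵥ W) = u * δ 0 - v * δ (Fin.last (K + 1)) := by
      rw [hW, Mmat_wstar, dot_rhsv]
    have h4 : δ ⬝ᵥ (Mmat (K + 1) *ᵥ W)
        = ((K + 1 + 1 : ℝ))⁻¹ ^ 2 * (δ ⬝ᵥ W) + δ ⬝ᵥ ((AK (K + 1)) *ᵥ W) := by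
      rw [Mmat_mulVec, dotProduct_add, dotProduct_smul, smul_eq_mul]
      push_cast
      ring
    rw [h1, h2]
    linear_combination h3 - h4
  unfold HSC
  have hy : ∀ t, y t = W t + δ t := by intro t; simp [hδ]
  have e1 : ∑ j : Fin (K + 1), (y j.castSucc - y j.succ) ^ 2
      = ∑ j : Fin (K + 1), (W j.castSucc - W j.succ) ^ 2
        + ∑ j : Fin (K + 1), (δ j.castSucc - δ j.succ) ^ 2
        + 2 * ∑ j : Fin (K + 1), (δ j.castSucc - δ j.succ) * (W j.castSucc - W j.succ) := by
    have h : ∀ j : Fin (K + 1), (y j.castSucc - y j.succ) ^ 2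
        = ((W j.castSucc - W j.succ) ^ 2 + (δ j.castSucc - δ j.succ) ^ 2)
          + 2 * ((δ j.castSucc - δ j.succ) * (W j.castSucc - W j.succ)) := by
      intro j; rw [hy j.castSucc, hy j.succ]; ring
    rw [Finset.sum_congr rfl fun j _ => h j, Finset.sum_add_distrib, Finset.sum_add_distrib,
      ← Finset.mul_sum]
  have e2 : ∑ t : Fin (K + 2), (y t) ^ 2
      = ∑ t, (W t) ^ 2 + ∑ t, (δ t) ^ 2 + 2 * ∑ t, δ t * W t := by
    have h : ∀ t : Fin (K + 2), (y t) ^ 2 = ((W t) ^ 2 + (δ t) ^ 2) + 2 * (δ t * W t) := by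
      intro t; rw [hy t]; ring
    rw [Finset.sum_congr rfl fun t _ => h t, Finset.sum_add_distrib, Finset.sum_add_distrib,
      ← Finset.mul_sum]
  have e3 : ∀ j : Fin (K + 1), y j.castSucc - W j.castSucc - (y j.succ - W j.succ)
      = δ j.castSucc - δ j.succ := by
    intro j; simp [hδ]
  rw [e1, e2, hy 0, hy (Fin.last (K + 1)),
    Finset.sum_congr rfl fun j (_ : j ∈ Finset.univ) => congrArg (· ^ 2) (e3 j)]
  have hsum : ∑ t : Fin (K + 2), (y t - W t) ^ 2 = ∑ t, (δ t) ^ 2 := by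
    apply Finset.sum_congr rfl; intro t _; rw [hδ]
  rw [hsum]
  have hco : (1:ℝ) / (2 * ((K + 1 + 1 : ℝ)) ^ 2) * 2 = ((K + 1 + 1 : ℝ))⁻¹ ^ 2 := by
    have hne : ((K : ℝ) + 1 + 1) ≠ 0 := by positivity
    field_simp
  push_cast at cross hco ⊢
  linear_combination cross + (∑ t : Fin (K + 2), δ t * W t) * hco

lemma wstar_apply (K : ℕ) (u v : ℝ) (i : Fin (K + 1)) :
    wstar K u v i = BK K i 0 * u - BK K i (Fin.last K) * v := by
  unfold wstar rhsv
  show ∑ j, BK K i j * ((if j = 0 then u else 0) - (if j = Fin.last K then v else 0)) = _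
  have h1 : ∀ j : Fin (K + 1),
      BK K i j * ((if j = 0 then u else 0) - (if j = Fin.last K then v else 0))
        = (if j = (0 : Fin (K + 1)) then BK K i j * u else 0)
          - (if j = Fin.last K then BK K i j * v else 0) := by
    intro j; split_ifs <;> ring
  rw [Finset.sum_congr rfl fun j _ => h1 j, Finset.sum_sub_distrib,
    Finset.sum_ite_eq' Finset.univ (0 : Fin (K + 1)), Finset.sum_ite_eq' Finset.univ (Fin.last K)]
  simp only [Finset.mem_univ, if_true]

lemma wstar_zero (K : ℕ) (u v : ℝ) :
    wstar (K + 1) u v 0 = BK (K + 1) 0 0 * u - BK (K + 1) 0 (Fin.last (K + 1)) * v :=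
  wstar_apply (K + 1) u v 0

lemma wstar_last (K : ℕ) (u v : ℝ) :
    wstar (K + 1) u v (Fin.last (K + 1))
      = BK (K + 1) 0 (Fin.last (K + 1)) * u - BK (K + 1) 0 0 * v := by
  rw [wstar_apply (K + 1) u v (Fin.last (K + 1))]
  have h1 : BK (K + 1) (Fin.last (K + 1)) 0 = BK (K + 1) 0 (Fin.last (K + 1)) :=
    BK_symm_apply (K + 1) (Fin.last (K + 1)) 0
  have h2 : BK (K + 1) (Fin.last (K + 1)) (Fin.last (K + 1)) = BK (K + 1) 0 0 := by
    have h := BK_rev K (Fin.last (K + 1)) (Fin.last (K + 1))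
    rw [Fin.rev_last] at h; exact h.symm
  rw [h1, h2]


/-- **Hyper-objective identity for the NC-SC hard instance**: for `K ≥ 10`
(here `K = K'+10`), `T ≥ 2` (here `T = T'+2`), `ν ∈ (0,1]`, `r ≥ 1`, and the unique
lower-level minimizer `(z*(x), y*(x))` of `(z,y) ↦ ḡ^{sc}(x,z,y)`, one has
`f̄^{nc-sc}(x, z*(x), y*(x)) = f̄^{nc}_{ν,r}(K^{3/2} x)` for every `x`. -/
theorem hyperobjective_identity (K' T' : ℕ) (ν r : ℝ)
    (hν0 : 0 < ν) (hν1 : ν ≤ 1) (hr : 1 ≤ r)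
    (zst : EV (T' + 2) → EV (T' + 2)) (yst : EV (T' + 2) → EY (K' + 9) T')
    (hmin : ∀ (x z : EV (T' + 2)) (y : EY (K' + 9) T'),
      gbar (K' + 9) T' x (zst x) (yst x) ≤ gbar (K' + 9) T' x z y) :
    ∀ x : EV (T' + 2),
      fbar (K' + 9) T' ν r (zst x) (yst x)
        = fnc T' ν r (((K' + 10 : ℝ)) ^ ((3 : ℝ) / 2) • x) := by
  intro x
  have hq : BK (K' + 9) 0 (Fin.last (K' + 9)) ≠ 0 := B0last_ne (K' + 8)
  set NN : ℝ := ((K' + 9 : ℕ) : ℝ) + 1 with hNN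
  have hNpos : (0 : ℝ) < NN := by rw [hNN]; positivity
  have hNne : NN ≠ 0 := ne_of_gt hNpos
  set zh : EV (T' + 2) := (WithLp.toLp 2 (fun j => NN ^ 2 * x j) : EV (T' + 2)) with hzh
  set yh : EY (K' + 9) T' :=
    (WithLp.toLp 2 (fun p : Fin (T' + 1) × Fin (K' + 10) => wstar (K' + 9) (x p.1.castSucc) (x p.1.succ) p.2) : EY (K' + 9) T') with hyh
  have hzhj : ∀ j, zh j = NN ^ 2 * x j := fun j => by rw [hzh]
  have hyhp : ∀ (i : Fin (T' + 1)) (t : Fin (K' + 10)),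
      yh (i, t) = wstar (K' + 9) (x i.castSucc) (x i.succ) t := fun i t => by rw [hyh]
  have eH : ∀ (y : EY (K' + 9) T') (i : Fin (T' + 1)),
      HSC (K' + 9) (x i.castSucc) (x i.succ) (fun t => y (i, t))
        = HSC (K' + 9) (x i.castSucc) (x i.succ) (fun t => yh (i, t))
          + (1 / 2) * ∑ jj : Fin (K' + 9),
              ((y (i, jj.castSucc) - yh (i, jj.castSucc)) - (y (i, jj.succ) - yh (i, jj.succ))) ^ 2
          + (1 / (2 * NN ^ 2)) * ∑ t, (y (i, t) - yh (i, t)) ^ 2 := by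
    intro y i
    exact HSC_expand (K' + 8) (x i.castSucc) (x i.succ) (fun t => y (i, t))
  have ezh : ∀ z : EV (T' + 2),
      (1 / (2 * NN ^ 2)) * ∑ j, (z j) ^ 2 - ∑ j, x j * z j
        = ((1 / (2 * NN ^ 2)) * ∑ j, (zh j) ^ 2 - ∑ j, x j * zh j)
          + (1 / (2 * NN ^ 2)) * ∑ j, (z j - zh j) ^ 2 := by
    intro z
    have hpt : ∀ j : Fin (T' + 2),
        (1 / (2 * NN ^ 2)) * (z j) ^ 2 - x j * z j
          = ((1 / (2 * NN ^ 2)) * (zh j) ^ 2 - x j * zh j)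
            + (1 / (2 * NN ^ 2)) * (z j - zh j) ^ 2 := by
      intro j
      rw [hzhj j]
      field_simp
      ring
    calc (1 / (2 * NN ^ 2)) * ∑ j, (z j) ^ 2 - ∑ j, x j * z j
        = ∑ j, ((1 / (2 * NN ^ 2)) * (z j) ^ 2 - x j * z j) := by
          rw [Finset.mul_sum, Finset.sum_sub_distrib]
      _ = ∑ j, (((1 / (2 * NN ^ 2)) * (zh j) ^ 2 - x j * zh j)
            + (1 / (2 * NN ^ 2)) * (z j - zh j) ^ 2) := Finset.sum_congr rfl fun j _ => hpt j
      _ = ((1 / (2 * NN ^ 2)) * ∑ j, (zh j) ^ 2 - ∑ j, x j * zh j)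
            + (1 / (2 * NN ^ 2)) * ∑ j, (z j - zh j) ^ 2 := by
          rw [Finset.sum_add_distrib, Finset.sum_sub_distrib, ← Finset.mul_sum, ← Finset.mul_sum]
  have expand : ∀ (z : EV (T' + 2)) (y : EY (K' + 9) T'),
      gbar (K' + 9) T' x z y
        = gbar (K' + 9) T' x zh yh
          + (1 / (2 * NN ^ 2)) * ∑ j, (z j - zh j) ^ 2
          + ∑ i : Fin (T' + 1), (1 / 2) * ∑ jj : Fin (K' + 9),
              ((y (i, jj.castSucc) - yh (i, jj.castSucc)) - (y (i, jj.succ) - yh (i, jj.succ))) ^ 2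
          + ∑ i : Fin (T' + 1), (1 / (2 * NN ^ 2)) * ∑ t, (y (i, t) - yh (i, t)) ^ 2 := by
    intro z y
    rw [gbar_eq, gbar_eq, ← hNN]
    rw [Finset.sum_congr rfl fun i (_ : i ∈ Finset.univ) => eH y i]
    rw [Finset.sum_add_distrib, Finset.sum_add_distrib]
    linear_combination ezh z
  have hle := hmin x zh yh
  rw [expand (zst x) (yst x)] at hle
  have c1 : (0:ℝ) < 1 / (2 * NN ^ 2) := by positivity
  have n0 : (0:ℝ) ≤ ∑ j, (zst x j - zh j) ^ 2 := Finset.sum_nonneg fun j _ => sq_nonneg _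
  have n1 : (0:ℝ) ≤ ∑ i : Fin (T' + 1), (1 / 2) * ∑ jj : Fin (K' + 9),
      ((yst x (i, jj.castSucc) - yh (i, jj.castSucc))
        - (yst x (i, jj.succ) - yh (i, jj.succ))) ^ 2 :=
    Finset.sum_nonneg fun i _ => by positivity
  have n2 : (0:ℝ) ≤ ∑ i : Fin (T' + 1), (1 / (2 * NN ^ 2)) * ∑ t, (yst x (i, t) - yh (i, t)) ^ 2 :=
    Finset.sum_nonneg fun i _ => by positivity
  have hz0 : ∑ j, (zst x j - zh j) ^ 2 = 0 := by
    have h1 : (1 / (2 * NN ^ 2)) * ∑ j, (zst x j - zh j) ^ 2 ≤ 0 := by linarith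
    have h2 : ∑ j, (zst x j - zh j) ^ 2 ≤ 0 := by nlinarith
    exact le_antisymm h2 n0
  have hy0 : ∑ i : Fin (T' + 1), (1 / (2 * NN ^ 2)) * ∑ t, (yst x (i, t) - yh (i, t)) ^ 2 = 0 := by
    have h1 : (1 / (2 * NN ^ 2)) * ∑ j, (zst x j - zh j) ^ 2 ≥ 0 :=
      le_of_eq (by rw [hz0, mul_zero])
    have h2 : ∑ i : Fin (T' + 1), (1 / (2 * NN ^ 2)) * ∑ t, (yst x (i, t) - yh (i, t)) ^ 2 ≤ 0 := by
      linarith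
    exact le_antisymm h2 n2
  have hzc : ∀ j, zst x j = zh j := by
    intro j
    have h := (Finset.sum_eq_zero_iff_of_nonneg (fun j _ => sq_nonneg _)).mp hz0 j (Finset.mem_univ j)
    have h2 := pow_eq_zero_iff (two_ne_zero) |>.mp h
    exact sub_eq_zero.mp h2
  have hyc : ∀ (i : Fin (T' + 1)) (t : Fin (K' + 10)), yst x (i, t) = yh (i, t) := by
    intro i t
    have hi := (Finset.sum_eq_zero_iff_of_nonneg
      (fun i _ => by positivity : ∀ i ∈ Finset.univ,
        (0:ℝ) ≤ (1 / (2 * NN ^ 2)) * ∑ t, (yst x (i, t) - yh (i, t)) ^ 2)).mp hy0 i (Finset.mem_univ i)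
    have hsz : ∑ t, (yst x (i, t) - yh (i, t)) ^ 2 = 0 := by
      rcases mul_eq_zero.mp hi with h | h
      · exact absurd h (ne_of_gt c1)
      · exact h
    have h := (Finset.sum_eq_zero_iff_of_nonneg (fun t _ => sq_nonneg _)).mp hsz t (Finset.mem_univ t)
    have h2 := pow_eq_zero_iff (two_ne_zero) |>.mp h
    exact sub_eq_zero.mp h2
  -- final computation
  have hss : Real.sqrt NN * Real.sqrt NN = NN := Real.mul_self_sqrt (le_of_lt hNpos)
  have hsne : Real.sqrt NN ≠ 0 := by positivity
  have hs : ((K' + 10 : ℝ)) ^ ((3 : ℝ) / 2) = NN * Real.sqrt NN := by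
    have h10 : ((K' : ℝ) + 10) = NN := by rw [hNN]; push_cast; ring
    rw [h10, show (3:ℝ)/2 = 1 + 1/2 by norm_num, Real.rpow_add hNpos, Real.rpow_one,
      ← Real.sqrt_eq_rpow]
  have hdiv : ∀ a : ℝ, NN ^ 2 * a / Real.sqrt NN = NN * Real.sqrt NN * a := by
    intro a
    rw [div_eq_iff hsne]
    linear_combination (-(NN * a)) * hss
  have hxz : ∀ j : Fin (T' + 2), zst x j = NN ^ 2 * x j := fun j => (hzc j).trans (hzhj j)
  have hsm : ∀ j : Fin (T' + 2),
      (((K' + 10 : ℝ)) ^ ((3 : ℝ) / 2) • x) j = NN * Real.sqrt NN * x j := by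
    intro j
    rw [PiLp.smul_apply, smul_eq_mul, hs]
  have hw0 : ∀ u v : ℝ, wstar (K' + 9) u v 0
      = BK (K' + 9) 0 0 * u - BK (K' + 9) 0 (Fin.last (K' + 9)) * v :=
    fun u v => wstar_zero (K' + 8) u v
  have hwl : ∀ u v : ℝ, wstar (K' + 9) u v (Fin.last (K' + 9))
      = BK (K' + 9) 0 (Fin.last (K' + 9)) * u - BK (K' + 9) 0 0 * v :=
    fun u v => wstar_last (K' + 8) u v
  unfold fbar fnc hfun
  simp only [hxz, hsm]
  rw [← hNN]
  simp only [hyc, hyhp, hw0, hwl, hdiv]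
  have per : ∀ u v : ℝ,
      aK (K' + 9) / 2 * ((NN ^ 2 * u) ^ 2 + (NN ^ 2 * v) ^ 2)
        + bK (K' + 9) / 2 * ((NN ^ 2 * u) * (BK (K' + 9) 0 0 * u - BK (K' + 9) 0 (Fin.last (K' + 9)) * v)
            - (NN ^ 2 * v) * (BK (K' + 9) 0 (Fin.last (K' + 9)) * u - BK (K' + 9) 0 0 * v))
        = (1 / 2) * (NN * Real.sqrt NN * v - NN * Real.sqrt NN * u) ^ 2 := by
    intro u v
    have hrhs : (1 / 2) * (NN * Real.sqrt NN * v - NN * Real.sqrt NN * u) ^ 2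
        = NN ^ 3 / 2 * (v - u) ^ 2 := by
      linear_combination (NN ^ 2 * (v - u) ^ 2 / 2) * hss
    rw [hrhs]
    unfold aK bK
    rw [← hNN]
    field_simp
    ring
  rw [Finset.sum_congr rfl fun (i : Fin (T' + 1)) (_ : i ∈ Finset.univ) =>
    per (x i.castSucc) (x i.succ)]
  rw [← Finset.mul_sum]
  ring
end
end

section
/- Convergence of accelerated gradient descent in iterate distance (Lemma 13): let h : ℝ^d → ℝ be differentiable, μ_h-strongly convex with L_h-Lipschitz continuous gradient, 0 < μ_h ≤ L_h, κ_h := L_h/μ_h, and let z* be the unique minimizer of h. Given z₀ ∈ ℝ^d, define z̃₀ := z₀ and, for k ≥ 0, z_{k+1} := z̃_k − (1/L_h) ∇h(z̃_k) and z̃_{k+1} := z_{k+1} + ((√κ_h − 1)/(√κ_h + 1))(z_{k+1} − z_k). Then for every K ≥ 0, ‖z_K − z*‖² ≤ (1 + κ_h)(1 − 1/√κ_h)^K ‖z₀ − z*‖². -/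
/-!
Statement 15: convergence of Nesterov's accelerated gradient descent in iterate
distance (Lemma 13): for a `μ_h`-strongly convex function `h` with `L_h`-Lipschitz
gradient and minimizer `z*`, the AGD iterates satisfy
`‖z_K − z*‖² ≤ (1 + κ_h)(1 − 1/√κ_h)^K ‖z₀ − z*‖²` where `κ_h = L_h/μ_h`.
-/

noncomputable section
open scoped RealInnerProductSpace

section Helpers

variable {E : Type*} [NormedAddCommGroup E] [InnerProductSpace ℝ E] [CompleteSpace E]

lemma hasDerivAt_comp_line {f : E → ℝ} (hf : Differentiable ℝ f) (x v : E) (t : ℝ) :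
    HasDerivAt (fun t : ℝ => f (x + t • v)) ⟪gradient f (x + t • v), v⟫ t := by
  have hc : HasDerivAt (fun t : ℝ => x + t • v) v t := by
    simpa using ((hasDerivAt_id t).smul_const v).const_add x
  have hFD : HasFDerivAt f (InnerProductSpace.toDual ℝ E (gradient f (x + t • v))) (x + t • v) :=
    hasGradientAt_iff_hasFDerivAt.mp (hf (x + t • v)).hasGradientAt
  exact hFD.comp_hasDerivAt t hc

lemma convex_slope_aux {g : E → ℝ} (hg : ConvexOn ℝ Set.univ g) {x y : E} {G : ℝ}
    (hG : HasDerivAt (fun t : ℝ => g (x + t • (y - x))) G 0) : g x + G ≤ g y := by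
  have hφc : ConvexOn ℝ Set.univ (fun t : ℝ => g (x + t • (y - x))) := by
    have h1 := hg.comp_affineMap (AffineMap.lineMap x y : ℝ →ᵃ[ℝ] E)
    have h2 : (g ∘ (AffineMap.lineMap x y : ℝ →ᵃ[ℝ] E)) = fun t : ℝ => g (x + t • (y - x)) := by
      funext t
      simp [AffineMap.lineMap_apply, add_comm]
    rw [h2] at h1
    simpa using h1
  have key := hφc.le_slope_of_hasDerivAt (Set.mem_univ (0:ℝ)) (Set.mem_univ (1:ℝ)) one_pos hG
  rw [slope_def_field] at key
  simp only [zero_smul, add_zero, one_smul, add_sub_cancel] at key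
  have : (g y - g x) / (1 - 0) = g y - g x := by norm_num
  rw [this] at key
  linarith

lemma strong_lower {f : E → ℝ} {μ : ℝ} (hsc : StrongConvexOn Set.univ μ f)
    (hdf : Differentiable ℝ f) (x y : E) :
    f x + ⟪gradient f x, y - x⟫ + μ / 2 * ‖y - x‖ ^ 2 ≤ f y := by
  have hg : ConvexOn ℝ Set.univ fun z => f z - μ / 2 * ‖z‖ ^ 2 := strongConvexOn_iff_convex.mp hsc
  set v := y - x with hv
  have hq : HasDerivAt (fun t : ℝ => μ / 2 * ‖x + t • v‖ ^ 2) (μ * ⟪x, v⟫) 0 := by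
    have h1 : (fun t : ℝ => μ / 2 * ‖x + t • v‖ ^ 2)
        = fun t : ℝ => μ / 2 * (‖x‖ ^ 2 + 2 * t * ⟪x, v⟫ + t ^ 2 * ‖v‖ ^ 2) := by
      funext t
      rw [norm_add_sq_real, real_inner_smul_right, norm_smul, mul_pow, Real.norm_eq_abs, sq_abs]
      ring
    rw [h1]
    have h3 : HasDerivAt (fun t : ℝ => 2 * t * ⟪x, v⟫) (2 * ⟪x, v⟫) 0 := by
      simpa using (((hasDerivAt_id (0:ℝ)).const_mul 2).mul_const ⟪x, v⟫)
    have h2 : HasDerivAt (fun t : ℝ => t ^ 2 * ‖v‖ ^ 2) 0 0 := by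
      simpa using (hasDerivAt_pow 2 (0:ℝ)).mul_const (‖v‖ ^ 2)
    have := (((hasDerivAt_const (0:ℝ) (‖x‖ ^ 2)).add h3).add h2).const_mul (μ / 2)
    refine this.congr_deriv ?_
    ring
  have hf := hasDerivAt_comp_line hdf x v 0
  simp only [zero_smul, add_zero] at hf
  have hG := hf.sub hq
  have key := convex_slope_aux hg hG
  have e1 : ‖v‖ ^ 2 = ‖y‖ ^ 2 - 2 * ⟪x, y⟫ + ‖x‖ ^ 2 := by
    rw [hv, norm_sub_sq_real]; rw [real_inner_comm]
  have e2 : ⟪x, v⟫ = ⟪x, y⟫ - ‖x‖ ^ 2 := by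
    rw [hv, inner_sub_right, real_inner_self_eq_norm_sq]
  rw [e2] at key
  have e1' : μ / 2 * ‖v‖ ^ 2 = μ / 2 * (‖y‖ ^ 2 - 2 * ⟪x, y⟫ + ‖x‖ ^ 2) := by rw [e1]
  linarith [e1']

lemma lip_upper {f : E → ℝ} {L : ℝ} (hL : 0 ≤ L) (hdf : Differentiable ℝ f)
    (hlip : ∀ a b : E, ‖gradient f a - gradient f b‖ ≤ L * ‖a - b‖) (x y : E) :
    f y ≤ f x + ⟪gradient f x, y - x⟫ + L / 2 * ‖y - x‖ ^ 2 := by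
  set v := y - x with hv
  set c1 : ℝ := ⟪gradient f x, v⟫ with hc1
  set ψ : ℝ → ℝ := fun t => f (x + t • v) - t * c1 - L / 2 * ‖v‖ ^ 2 * t ^ 2 with hψ
  have hψd : ∀ t : ℝ, HasDerivAt ψ (⟪gradient f (x + t • v), v⟫ - c1 - L * ‖v‖ ^ 2 * t) t := by
    intro t
    have h1 := hasDerivAt_comp_line hdf x v t
    have h2 : HasDerivAt (fun t : ℝ => t * c1) c1 t := by
      simpa using (hasDerivAt_id t).mul_const c1
    have h3 : HasDerivAt (fun t : ℝ => L / 2 * ‖v‖ ^ 2 * t ^ 2) (L * ‖v‖ ^ 2 * t) t := by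
      have := (hasDerivAt_pow 2 t).const_mul (L / 2 * ‖v‖ ^ 2)
      refine this.congr_deriv ?_
      push_cast
      ring
    exact (h1.sub h2).sub h3
  have hmono : AntitoneOn ψ (Set.Icc (0:ℝ) 1) := by
    apply antitoneOn_of_deriv_nonpos (convex_Icc 0 1)
    · exact (Differentiable.continuous (fun t => (hψd t).differentiableAt)).continuousOn
    · exact (Differentiable.differentiableOn (fun t => (hψd t).differentiableAt))
    · intro t ht
      rw [interior_Icc] at ht
      rw [(hψd t).deriv]
      have hCS : ⟪gradient f (x + t • v) - gradient f x, v⟫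
          ≤ ‖gradient f (x + t • v) - gradient f x‖ * ‖v‖ := real_inner_le_norm _ _
      have hl := hlip (x + t • v) x
      have he : ‖x + t • v - x‖ = t * ‖v‖ := by
        simp [norm_smul, abs_of_pos ht.1]
      rw [he] at hl
      have hinner : ⟪gradient f (x + t • v) - gradient f x, v⟫
          = ⟪gradient f (x + t • v), v⟫ - c1 := by
        rw [inner_sub_left, hc1]
      have hv0 : (0:ℝ) ≤ ‖v‖ := norm_nonneg v
      nlinarith [mul_le_mul_of_nonneg_right hl hv0]
  have h10 := hmono (Set.mem_Icc.mpr ⟨le_refl 0, zero_le_one⟩)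
      (Set.mem_Icc.mpr ⟨zero_le_one, le_refl 1⟩) zero_le_one
  have e0 : ψ 0 = f x := by simp [hψ]
  have e1 : ψ 1 = f y - c1 - L / 2 * ‖v‖ ^ 2 := by
    simp [hψ, hv]
  rw [e0, e1] at h10
  linarith

lemma norm_triple (A B C : ℝ) (p q r : E) :
    ‖A • p + B • q + C • r‖ ^ 2
      = A ^ 2 * ‖p‖ ^ 2 + B ^ 2 * ‖q‖ ^ 2 + C ^ 2 * ‖r‖ ^ 2
        + 2 * A * B * ⟪p, q⟫ + 2 * A * C * ⟪p, r⟫ + 2 * B * C * ⟪q, r⟫ := by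
  rw [← real_inner_self_eq_norm_sq]
  simp only [inner_add_left, inner_add_right, real_inner_smul_left, real_inner_smul_right,
    real_inner_self_eq_norm_sq, norm_smul, mul_pow, sq_abs, Real.norm_eq_abs]
  rw [real_inner_comm q p, real_inner_comm r p, real_inner_comm r q]
  ring


end Helpers

set_option maxHeartbeats 1000000 in
/-- **Convergence of accelerated gradient descent in iterate distance** (Lemma 13). -/
theorem agd_convergence_iterate_distance
    (d : ℕ) (h : EV d → ℝ) (μh Lh : ℝ) (hμ : 0 < μh) (hμL : μh ≤ Lh)
    (hdiff : Differentiable ℝ h)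
    (hsc : StrongConvexOn Set.univ μh h)
    (hlip : ∀ x y : EV d, ‖gradient h x - gradient h y‖ ≤ Lh * ‖x - y‖)
    (zstar : EV d) (hmin : ∀ z, h zstar ≤ h z)
    (z0 : EV d) (z zt : ℕ → EV d)
    (hz0 : z 0 = z0) (hzt0 : zt 0 = z0)
    (hstep : ∀ k : ℕ, z (k + 1) = zt k - (1 / Lh) • gradient h (zt k))
    (hmom : ∀ k : ℕ, zt (k + 1) = z (k + 1)
        + ((Real.sqrt (Lh / μh) - 1) / (Real.sqrt (Lh / μh) + 1)) • (z (k + 1) - z k)) :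
    ∀ K : ℕ, ‖z K - zstar‖ ^ 2
      ≤ (1 + Lh / μh) * (1 - 1 / Real.sqrt (Lh / μh)) ^ K * ‖z0 - zstar‖ ^ 2 := by
  intro K
  have hL : 0 < Lh := lt_of_lt_of_le hμ hμL
  set s : ℝ := Real.sqrt (Lh / μh) with hsdef
  have hratio : 1 ≤ Lh / μh := (one_le_div hμ).mpr hμL
  have hs1 : 1 ≤ s := by
    rw [hsdef, show (1:ℝ) = Real.sqrt 1 from Real.sqrt_one.symm]
    exact Real.sqrt_le_sqrt hratio
  have hs0 : 0 < s := lt_of_lt_of_le zero_lt_one hs1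
  have hsne : s ≠ 0 := ne_of_gt hs0
  have hLne : Lh ≠ 0 := ne_of_gt hL
  have hμne : μh ≠ 0 := ne_of_gt hμ
  have hs2 : s ^ 2 = Lh / μh := Real.sq_sqrt (by positivity)
  have hLs : Lh = μh * s ^ 2 := by rw [hs2]; field_simp
  have hgz : gradient h zstar = 0 := by
    have hloc : IsLocalMin h zstar := Filter.Eventually.of_forall hmin
    rw [gradient, hloc.fderiv_eq_zero, map_zero]
  set v : ℕ → EV d := fun k => (s + 1) • zt k - s • z k with hvdef
  have hv0 : v 0 = z0 := by
    simp only [hvdef, hzt0, hz0]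
    module
  have step : ∀ k : ℕ, (h (z (k + 1)) - h zstar) + μh / 2 * ‖v (k + 1) - zstar‖ ^ 2
      ≤ (1 - 1 / s) * ((h (z k) - h zstar) + μh / 2 * ‖v k - zstar‖ ^ 2) := by
    intro k
    have hs1ne : s + 1 ≠ 0 := by positivity
    set y := zt k with hy
    set g := gradient h (zt k) with hgdef
    have hp : z (k + 1) = y - (1 / Lh) • g := hstep k
    have hvk1 : v (k + 1) = s • z (k + 1) - (s - 1) • z k := by
      simp only [hvdef]
      rw [hmom k]
      match_scalars <;> field_simp <;> ring
    have hkey : v (k + 1) - zstar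
        = ((s - 1) / s) • (v k - zstar) + (1 / s) • (y - zstar) + (-(s / Lh)) • g := by
      rw [hvk1, hp]
      simp only [hvdef]
      match_scalars <;> field_simp <;> ring
    set a := v k - zstar with hadef
    set b := y - zstar with hbdef
    have e1 := norm_triple ((s - 1) / s) (1 / s) (-(s / Lh)) a b g
    rw [← hkey] at e1
    -- descent fact, scaled by 2 * Lh
    have f1 : 2 * (μh * s ^ 2) * h (z (k + 1)) ≤ 2 * (μh * s ^ 2) * h y - ‖g‖ ^ 2 := by
      have raw := lip_upper hL.le hdiff hlip y (z (k + 1))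
      have hd : z (k + 1) - y = (-(1 / Lh)) • g := by rw [hp]; module
      rw [hd, real_inner_smul_right, real_inner_self_eq_norm_sq, norm_smul] at raw
      have habs : ‖(-(1 / Lh) : ℝ)‖ = 1 / Lh := by
        rw [Real.norm_eq_abs, abs_neg, abs_of_pos (by positivity)]
      rw [habs, mul_pow] at raw
      have := mul_le_mul_of_nonneg_left raw (by positivity : (0:ℝ) ≤ 2 * Lh)
      have e : 2 * Lh * (h y + -(1 / Lh) * ‖g‖ ^ 2 + Lh / 2 * ((1 / Lh) ^ 2 * ‖g‖ ^ 2))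
          = 2 * Lh * h y - ‖g‖ ^ 2 := by field_simp; ring
      rw [e] at this
      rw [hLs] at this
      linarith
    -- strong convexity toward zstar, scaled by μh * s
    have f2 : μh * s * (h y + μh / 2 * ‖b‖ ^ 2 - ⟪b, g⟫) ≤ μh * s * h zstar := by
      have raw := strong_lower hsc hdiff y zstar
      rw [← hgdef] at raw
      have hzy : zstar - y = -b := by rw [hbdef]; module
      rw [hzy, inner_neg_right, norm_neg] at raw
      rw [real_inner_comm] at raw
      exact mul_le_mul_of_nonneg_left (by linarith) (by positivity)
    -- strong convexity toward z k, scaled by μh * (s - 1)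
    have f3 : μh * (s - 1) * (s * (h y - h (z k))) ≤ μh * (s - 1) * (⟪a, g⟫ - ⟪b, g⟫) := by
      have raw := strong_lower hsc hdiff y (z k)
      rw [← hgdef] at raw
      have hab : a - b = s • (y - z k) := by
        simp only [hadef, hbdef, hvdef]; module
      have h1 : ⟪a, g⟫ - ⟪b, g⟫ = s * ⟪y - z k, g⟫ := by
        rw [← inner_sub_left, hab, real_inner_smul_left]
      have h2 : ⟪g, z k - y⟫ = -⟪y - z k, g⟫ := by
        rw [real_inner_comm, show z k - y = -(y - z k) by module, inner_neg_left]
      rw [h2] at raw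
      have h3 : h y - h (z k) ≤ ⟪y - z k, g⟫ := by nlinarith [sq_nonneg ‖z k - y‖]
      have h4 : s * (h y - h (z k)) ≤ s * ⟪y - z k, g⟫ :=
        mul_le_mul_of_nonneg_left h3 hs0.le
      rw [h1]
      exact mul_le_mul_of_nonneg_left h4 (by nlinarith)
    have f4 : (0:ℝ) ≤ μh ^ 2 * (s - 1) * (‖a‖ ^ 2 - 2 * ⟪a, b⟫ + ‖b‖ ^ 2) := by
      have : (0:ℝ) ≤ ‖a‖ ^ 2 - 2 * ⟪a, b⟫ + ‖b‖ ^ 2 := by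
        rw [← norm_sub_sq_real]; positivity
      have hc : (0:ℝ) ≤ μh ^ 2 * (s - 1) := by nlinarith
      exact mul_nonneg hc this
    have hpos : (0:ℝ) < 2 * μh * s ^ 2 := by positivity
    refine le_of_mul_le_mul_left ?_ hpos
    have e1' : 2 * μh * s ^ 2 * ((h (z (k + 1)) - h zstar) + μh / 2 * ‖v (k + 1) - zstar‖ ^ 2)
        = 2 * (μh * s ^ 2) * h (z (k + 1)) - 2 * μh * s ^ 2 * h zstar
          + μh ^ 2 * (s - 1) ^ 2 * ‖a‖ ^ 2 + μh ^ 2 * ‖b‖ ^ 2 + ‖g‖ ^ 2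
          + 2 * μh ^ 2 * (s - 1) * ⟪a, b⟫ - 2 * μh * (s - 1) * ⟪a, g⟫ - 2 * μh * ⟪b, g⟫ := by
      rw [e1, hLs]
      field_simp
      ring
    have hr : 2 * μh * s ^ 2 * ((1 - 1 / s) * ((h (z k) - h zstar) + μh / 2 * ‖a‖ ^ 2))
        = 2 * μh * s * (s - 1) * ((h (z k) - h zstar) + μh / 2 * ‖a‖ ^ 2) := by
      field_simp
    rw [e1', hr]
    nlinarith [f1, f2, f3, f4]
  have h1s : 0 ≤ 1 - 1 / s := by
    rw [sub_nonneg, div_le_one hs0]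
    exact hs1
  have main : ∀ n : ℕ, (h (z n) - h zstar) + μh / 2 * ‖v n - zstar‖ ^ 2
      ≤ (1 - 1 / s) ^ n * ((h z0 - h zstar) + μh / 2 * ‖z0 - zstar‖ ^ 2) := by
    intro n
    induction n with
    | zero => simp [hz0, hv0]
    | succ m ih =>
      calc (h (z (m + 1)) - h zstar) + μh / 2 * ‖v (m + 1) - zstar‖ ^ 2
          ≤ (1 - 1 / s) * ((h (z m) - h zstar) + μh / 2 * ‖v m - zstar‖ ^ 2) := step m
        _ ≤ (1 - 1 / s) * ((1 - 1 / s) ^ m * ((h z0 - h zstar) + μh / 2 * ‖z0 - zstar‖ ^ 2)) :=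
            mul_le_mul_of_nonneg_left ih h1s
        _ = (1 - 1 / s) ^ (m + 1) * ((h z0 - h zstar) + μh / 2 * ‖z0 - zstar‖ ^ 2) := by ring
  have hlow := strong_lower hsc hdiff zstar (z K)
  rw [hgz] at hlow
  simp only [inner_zero_left, add_zero] at hlow
  have hub := lip_upper hL.le hdiff hlip zstar z0
  rw [hgz] at hub
  simp only [inner_zero_left, add_zero] at hub
  have hK := main K
  have hnn : 0 ≤ (1 - 1 / s) ^ K := pow_nonneg h1s K
  have hfinal : μh / 2 * ‖z K - zstar‖ ^ 2
      ≤ (1 - 1 / s) ^ K * ((Lh / 2 + μh / 2) * ‖z0 - zstar‖ ^ 2) := by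
    have hΦ0 : (h z0 - h zstar) + μh / 2 * ‖z0 - zstar‖ ^ 2
        ≤ (Lh / 2 + μh / 2) * ‖z0 - zstar‖ ^ 2 := by linarith
    have h2 := mul_le_mul_of_nonneg_left hΦ0 hnn
    have h3 : (0:ℝ) ≤ μh / 2 * ‖v K - zstar‖ ^ 2 := by positivity
    linarith
  have hμ2 : (0:ℝ) < μh / 2 := by positivity
  refine le_of_mul_le_mul_left ?_ hμ2
  have hr2 : μh / 2 * ((1 + Lh / μh) * (1 - 1 / s) ^ K * ‖z0 - zstar‖ ^ 2)
      = (1 - 1 / s) ^ K * ((Lh / 2 + μh / 2) * ‖z0 - zstar‖ ^ 2) := by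
    field_simp
    ring
  rw [hr2]
  exact hfinal
end
end
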